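/- arXiv:1909.06905 — 4 statements merged into one kernel-verified Lean document; each statement's English description precedes it below -/
import Mathlib

section
/- Let m > 0 and b₁, b₂ ∈ ℝ. If x ∈ 𝒪_ℰ^m(b₁) and y ∈ 𝒪_ℰ^m(b₂), then the product x·y lies in 𝒪_ℰ^m(b₁ + b₂). -/
open Filter Topology

noncomputable section

namespace AmiceStmt

variable {L : Type*} [NormedField L]

/-- The multiplication (coefficientwise convolution) of the Amice ring `ℰ` over `L`,
written on coefficient functions `ℤ → L`. -/
def mulE (x y : ℤ → L) : ℤ → L := fun n => ∑' k : ℤ, x k * y (n - k)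

/-- `x : ℤ → L` is the coefficient function of an element of the Amice ring `ℰ`:
the norms of the coefficients are bounded above (`v_p` bounded below), and
`‖x n‖ → 0` (`v_p(x n) → ∞`) as `n → -∞`. -/
def IsE (x : ℤ → L) : Prop :=
  (∃ C : ℝ, ∀ n : ℤ, ‖x n‖ ≤ C) ∧
    ∀ ε : ℝ, 0 < ε → ∃ N : ℤ, ∀ n : ℤ, n ≤ N → ‖x n‖ ≤ ε

/-- Membership in `𝒪_ℰ^m(b)`: an element of `ℰ` with integral coefficients
(`‖x n‖ ≤ 1`) satisfying the partial valuation condition `w_k(x) ≥ -k*m - b`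
for every `k : ℚ`, where `v_p(x n) ≤ k ↔ p^(-k) ≤ ‖x n‖`. -/
def MemOE (p : ℕ) (m b : ℝ) (x : ℤ → L) : Prop :=
  IsE x ∧ (∀ n : ℤ, ‖x n‖ ≤ 1) ∧
    ∀ (k : ℚ) (n : ℤ), (p : ℝ) ^ (-(k : ℝ)) ≤ ‖x n‖ → -(k : ℝ) * m - b ≤ (n : ℝ)

/-- The unit `1` of the Amice ring. -/
def oneE : ℤ → L := fun n => if n = 0 then 1 else 0

/-- The parameter `t` of the Amice ring. -/
def tE : ℤ → L := fun n => if n = 1 then 1 else 0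

/-- The monomial `t^k`, `k : ℤ`. -/
def tpowE (k : ℤ) : ℤ → L := fun n => if n = k then 1 else 0

/-- The constant (element of `L`) `a`, viewed in the Amice ring. -/
def constE (a : L) : ℤ → L := fun n => if n = 0 then a else 0

/-- Powers in the Amice ring. -/
def powE (x : ℤ → L) : ℕ → ℤ → L
  | 0 => oneE
  | n + 1 => mulE x (powE x n)

/-- Integer powers of a unit `x` of the Amice ring with inverse `xinv`. -/
def zpowE (x xinv : ℤ → L) (n : ℤ) : ℤ → L :=
  if 0 ≤ n then powE x n.toNat else powE xinv (-n).toNat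

/-- Membership in the bounded overconvergent ring `ℰ†`: an element of `ℰ` such that
there is `c > 0` with `v_p(x n) ≥ -c*n` (i.e. `‖x n‖ ≤ p^(c*n)`) for `n` sufficiently
negative. -/
def IsEdag (p : ℕ) (x : ℤ → L) : Prop :=
  IsE x ∧ ∃ c : ℝ, 0 < c ∧ ∃ N : ℤ, ∀ n : ℤ, n ≤ N → ‖x n‖ ≤ (p : ℝ) ^ (c * (n : ℝ))

/-- Membership in `𝒪_{ℰ†} = 𝒪_ℰ ∩ ℰ†`. -/
def IsOEdag (p : ℕ) (x : ℤ → L) : Prop := IsEdag p x ∧ ∀ n : ℤ, ‖x n‖ ≤ 1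

/-- A `p`-Frobenius endomorphism `ν` of `ℰ†` (over the normed field `K`): a ring
endomorphism of `ℰ†` preserving `𝒪_{ℰ†}`, extending a valuation-preserving field
automorphism `autL` of `K`, congruent to the `p`-th power map modulo the maximal ideal,
sending `t` to a unit of `ℰ†`, and acting on Laurent series by the coefficientwise
convergent formula `ν(∑ aₙ tⁿ) = ∑ aₙ^ν (ν t)ⁿ`. -/
structure PFrob (p : ℕ) (K : Type*) [NormedField K] where
  toFun : (ℤ → K) → ℤ → K
  autL : K ≃+* K
  autL_norm : ∀ a : K, ‖autL a‖ = ‖a‖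
  tInv : ℤ → K
  maps_Edag : ∀ x : ℤ → K, IsEdag p x → IsEdag p (toFun x)
  maps_OEdag : ∀ x : ℤ → K, IsOEdag p x → IsOEdag p (toFun x)
  map_add' : ∀ x y : ℤ → K, IsEdag p x → IsEdag p y → toFun (x + y) = toFun x + toFun y
  map_mul' : ∀ x y : ℤ → K, IsEdag p x → IsEdag p y →
    toFun (mulE x y) = mulE (toFun x) (toFun y)
  map_one' : toFun oneE = oneE
  map_const' : ∀ a : K, toFun (constE a) = constE (autL a)
  frob_mod' : ∀ x : ℤ → K, IsOEdag p x → ∀ n : ℤ, ‖(toFun x - powE x p) n‖ < 1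
  tInv_mem : IsEdag p tInv
  t_unit : mulE (toFun tE) tInv = oneE
  expansion : ∀ x : ℤ → K, IsEdag p x → ∀ j : ℤ,
    toFun x j = ∑' n : ℤ, autL (x n) * zpowE (toFun tE) tInv n j

/-- The `U_p` operator for the `p`-Frobenius `t ↦ t^p`:
`U_p(∑ aₙ tⁿ) = ∑ (a_{pn})^{ν⁻¹} tⁿ`. -/
def UpT1 (p : ℕ) (autL : L ≃+* L) (x : ℤ → L) : ℤ → L :=
  fun n => autL.symm (x ((p : ℤ) * n))

/-- The generalized binomial coefficient `C(r, n)` in `L`. -/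
def lbinom (r : L) (n : ℕ) : L := (∏ i ∈ Finset.range n, (r - (i : L))) / (n.factorial : L)

/-- The element `y ∈ ℰ` with `1 + p y = t^{-p(p-1)}((t^{p-1}+1)^p - 1)`, i.e.
`y = ∑_{i=1}^{p-1} (C(p,i)/p) t^{(p-1)(i-p)}`. -/
def yF (p : ℕ) : ℤ → L := fun j =>
  ∑ i ∈ Finset.Ico 1 p,
    if j = ((p : ℤ) - 1) * ((i : ℤ) - (p : ℤ)) then (p.choose i : L) / (p : L) else 0

/-- The element `F = t^p ∑_{n ≥ 0} C(1/(p-1), n) pⁿ yⁿ ∈ ℰ`, the `(p-1)`-st root of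
`(t^{p-1}+1)^p - 1` congruent to `t^p` mod `𝔪 𝒪_ℰ`. -/
def FE (p : ℕ) : ℤ → L := fun j =>
  ∑' n : ℕ, lbinom (((p : L) - 1)⁻¹) n * (p : L) ^ n * powE (yF p) n (j - (p : ℤ))

/-- The element `(t^{p-1}+1)^p - 1` of `ℰ`. -/
def GE (p : ℕ) : ℤ → L := fun j =>
  ∑ i ∈ Finset.Icc 1 p, if j = ((p : ℤ) - 1) * (i : ℤ) then (p.choose i : L) else 0

/-- The `p`-Frobenius endomorphism `ν` of `ℰ` with `ν(t) = F` (type 2 Frobenius,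
`t ↦ (p-1)-th root of (t^{p-1}+1)^p - 1`), given on Laurent series by
`ν(∑ aₙ tⁿ) = ∑ aₙ^ν Fⁿ`; `Finv` is the inverse of `F` in `ℰ`. -/
def nuF (p : ℕ) (autL : L ≃+* L) (Finv : ℤ → L) (x : ℤ → L) : ℤ → L :=
  fun j => ∑' n : ℤ, autL (x n) * zpowE (FE p) Finv n j

/-- Membership in `ℬ = { ∑ aₙ t^{(p-1)n} : aₙ ∈ 𝒪_L, v_p(aₙ) ≥ max(0, -n) }`. -/
def MemB (p : ℕ) (z : ℤ → L) : Prop :=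
  IsE z ∧ (∀ j : ℤ, ¬ ((p : ℤ) - 1 ∣ j) → z j = 0) ∧
    ∀ n : ℤ, ‖z (((p : ℤ) - 1) * n)‖ ≤ (p : ℝ) ^ (-(max 0 (-n)) : ℤ)

/-- Membership in `𝒜 = t⁻¹ℬ + t⁻²ℬ + ⋯ + t^{-(p-1)}ℬ`. -/
def MemA (p : ℕ) (x : ℤ → L) : Prop :=
  ∃ z : ℕ → ℤ → L, (∀ i : ℕ, MemB p (z i)) ∧
    x = fun m => ∑ i ∈ Finset.Icc 1 (p - 1), z i (m + (i : ℤ))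

/-- The exponent `a(n) = ⌊(n-1)/(p-1)⌋` for `n ≥ 1` (and `0` for `n ≤ 0`). -/
def aExp (p : ℕ) (n : ℤ) : ℤ := if 1 ≤ n then (n - 1) / ((p : ℤ) - 1) else 0

/-- If `x ∈ 𝒪_ℰ^m(b₁)` and `y ∈ 𝒪_ℰ^m(b₂)`, then `x·y ∈ 𝒪_ℰ^m(b₁+b₂)`. -/
theorem statement_0 {p : ℕ} (hp : p.Prime) (hp3 : 3 ≤ p)
    {L : Type*} [NormedField L] [CompleteSpace L] [IsUltrametricDist L]
    (hpL : ‖(p : L)‖ = (p : ℝ)⁻¹)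
    (m b₁ b₂ : ℝ) (hm : 0 < m) (x y : ℤ → L)
    (hx : MemOE p m b₁ x) (hy : MemOE p m b₂ y) :
    MemOE p m (b₁ + b₂) (mulE x y) := by
  obtain ⟨⟨_, hxv⟩, hx1, hxw⟩ := hx
  obtain ⟨⟨_, hyv⟩, hy1, hyw⟩ := hy
  have hp1 : (1 : ℝ) < (p : ℝ) := by
    exact_mod_cast hp.one_lt
  have hp0 : (0 : ℝ) < (p : ℝ) := lt_trans one_pos hp1
  -- each coefficient of the product has norm ≤ 1
  have hbound : ∀ n : ℤ, ‖mulE x y n‖ ≤ 1 := by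
    intro n
    refine IsUltrametricDist.norm_tsum_le_of_forall_le_of_nonneg zero_le_one fun j => ?_
    rw [norm_mul]
    exact mul_le_one₀ (hx1 j) (norm_nonneg _) (hy1 _)
  refine ⟨⟨⟨1, hbound⟩, ?_⟩, hbound, ?_⟩
  · -- vanishing as n → -∞
    intro ε hε
    obtain ⟨N₁, hN₁⟩ := hxv ε hε
    obtain ⟨N₂, hN₂⟩ := hyv ε hε
    refine ⟨N₁ + N₂, fun n hn => ?_⟩
    refine IsUltrametricDist.norm_tsum_le_of_forall_le_of_nonneg hε.le fun j => ?_
    rw [norm_mul]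
    rcases le_or_gt j N₁ with hj | hj
    · calc ‖x j‖ * ‖y (n - j)‖ ≤ ε * 1 :=
            mul_le_mul (hN₁ j hj) (hy1 _) (norm_nonneg _) hε.le
        _ = ε := mul_one ε
    · have : n - j ≤ N₂ := by omega
      calc ‖x j‖ * ‖y (n - j)‖ ≤ 1 * ε :=
            mul_le_mul (hx1 j) (hN₂ _ this) (norm_nonneg _) zero_le_one
        _ = ε := one_mul ε
  · -- the partial valuation condition
    intro k n hk
    have key : ∀ ε : ℚ, 0 < ε → -(((k + ε : ℚ) : ℝ)) * m - (b₁ + b₂) ≤ (n : ℝ) := by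
      intro ε hε
      set K : ℚ := k + ε with hK
      have hkK : (p : ℝ) ^ (-(K : ℝ)) < (p : ℝ) ^ (-(k : ℝ)) := by
        apply (Real.rpow_lt_rpow_left_iff hp1).mpr
        push_cast [hK]
        linarith [(by exact_mod_cast hε : (0 : ℝ) < (ε : ℝ))]
      have hlt : (p : ℝ) ^ (-(K : ℝ)) < ⨆ j : ℤ, ‖x j * y (n - j)‖ :=
        lt_of_lt_of_le (lt_of_lt_of_le hkK hk) (IsUltrametricDist.norm_tsum_le _)
      obtain ⟨j, hj⟩ := exists_lt_of_lt_ciSup hlt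
      rw [norm_mul] at hj
      have hrpos : 0 < ‖x j‖ := by
        by_contra h
        push_neg at h
        have : ‖x j‖ = 0 := le_antisymm h (norm_nonneg _)
        rw [this, zero_mul] at hj
        exact absurd hj (not_lt_of_ge (Real.rpow_nonneg hp0.le _))
      have hspos : 0 < ‖y (n - j)‖ := by
        by_contra h
        push_neg at h
        have : ‖y (n - j)‖ = 0 := le_antisymm h (norm_nonneg _)
        rw [this, mul_zero] at hj
        exact absurd hj (not_lt_of_ge (Real.rpow_nonneg hp0.le _))
      set α : ℝ := -Real.logb p ‖x j‖ with hα
      set β : ℝ := -Real.logb p ‖y (n - j)‖ with hβ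
      have hpne1 : (p : ℝ) ≠ 1 := ne_of_gt hp1
      have hrα : (p : ℝ) ^ (-α) = ‖x j‖ := by
        rw [hα, neg_neg]; exact Real.rpow_logb hp0 hpne1 hrpos
      have hsβ : (p : ℝ) ^ (-β) = ‖y (n - j)‖ := by
        rw [hβ, neg_neg]; exact Real.rpow_logb hp0 hpne1 hspos
      have hαβ : α + β < (K : ℝ) := by
        have : (p : ℝ) ^ (-(K : ℝ)) < (p : ℝ) ^ (-(α + β)) := by
          rw [neg_add, Real.rpow_add hp0, hrα, hsβ]; exact hj
        have := (Real.rpow_lt_rpow_left_iff hp1).mp this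
        linarith
      obtain ⟨q₁, hq₁l, hq₁r⟩ := exists_rat_btwn (by linarith : α < (K : ℝ) - β)
      -- apply the valuation hypothesis for x at q₁
      have hxj : (p : ℝ) ^ (-(q₁ : ℝ)) ≤ ‖x j‖ := by
        rw [← hrα]
        exact (Real.rpow_le_rpow_left_iff hp1).mpr (by linarith)
      have h1 : -(q₁ : ℝ) * m - b₁ ≤ (j : ℝ) := hxw q₁ j hxj
      -- apply the valuation hypothesis for y at K - q₁
      have hyj : (p : ℝ) ^ (-((K - q₁ : ℚ) : ℝ)) ≤ ‖y (n - j)‖ := by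
        rw [← hsβ]
        apply (Real.rpow_le_rpow_left_iff hp1).mpr
        push_cast
        linarith
      have h2 : -((K - q₁ : ℚ) : ℝ) * m - b₂ ≤ ((n - j : ℤ) : ℝ) := hyw (K - q₁) (n - j) hyj
      push_cast at h1 h2 ⊢
      nlinarith
    refine le_of_forall_pos_le_add fun δ hδ => ?_
    obtain ⟨q, hq0, hqδ⟩ := exists_rat_btwn (by positivity : (0 : ℝ) < δ / m)
    have hq0' : (0 : ℚ) < q := by exact_mod_cast hq0
    have := key q hq0'
    push_cast at this
    have hqm : (q : ℝ) * m < δ := (lt_div_iff₀ hm).mp hqδ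
    nlinarith

end AmiceStmt
end
end

section
/- Let s be a positive rational number and assume 𝒪_L contains an element π_s with π_s^{s(p−1)} = −p (so v_p(π_s) = 1/(s(p−1))). Then for every integer n ≥ 0 and every x ∈ 𝒪_ℰ^{s(p−1)}, one has U_p(π_s^{pn} · t^{−n} · x) ∈ π_s^{(p−1)n} · 𝒪_ℰ^{s(p−1)/p}. -/
open Filter Topology

noncomputable section

namespace AmiceStmt

variable {L : Type*} [NormedField L]

/-- For the `p`-Frobenius `t ↦ t^p`, a positive rational `s`, and
`π_s ∈ 𝒪_L` with `π_s^{s(p-1)} = -p`: for every `n ≥ 0` and `x ∈ 𝒪_ℰ^{s(p-1)}`,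
`U_p(π_s^{pn} t^{-n} x) ∈ π_s^{(p-1)n} 𝒪_ℰ^{s(p-1)/p}`. -/
theorem statement_4 {p : ℕ} (hp : p.Prime) (hp3 : 3 ≤ p)
    {L : Type*} [NormedField L] [CompleteSpace L] [IsUltrametricDist L]
    (hpL : ‖(p : L)‖ = (p : ℝ)⁻¹)
    (autL : L ≃+* L) (hautL : ∀ a : L, ‖autL a‖ = ‖a‖)
    (s : ℚ) (hs : 0 < s) (πs : L) (hπs_int : ‖πs‖ ≤ 1)
    (hπs : πs ^ (s * ((p : ℚ) - 1)).num.toNat = (-(p : L)) ^ (s * ((p : ℚ) - 1)).den)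
    (n : ℕ) (x : ℤ → L) (hx : MemOE p ((s : ℝ) * ((p : ℝ) - 1)) 0 x) :
    ∃ z : ℤ → L, MemOE p ((s : ℝ) * ((p : ℝ) - 1) / p) 0 z ∧
      UpT1 p autL (fun j => πs ^ (p * n) * x (j + (n : ℤ)))
        = fun j => πs ^ ((p - 1) * n) * z j := by
  classical
  obtain ⟨⟨hbdd, htail⟩, hle1, hval⟩ := hx
  have hp1 : (1:ℕ) ≤ p := hp.one_lt.le
  have hp0 : (0:ℝ) < p := by exact_mod_cast hp.pos
  have hp1R : (1:ℝ) < p := by exact_mod_cast hp.one_lt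
  set q : ℚ := s * ((p:ℚ) - 1) with hqdef
  have hqpos : 0 < q := by
    have h1 : (1:ℚ) < p := by exact_mod_cast hp.one_lt
    have : (0:ℚ) < (p:ℚ) - 1 := by linarith
    exact mul_pos hs this
  set m : ℝ := (s:ℝ) * ((p:ℝ) - 1) with hmdef
  have hm : ((q:ℝ)) = m := by rw [hqdef, hmdef]; push_cast; ring
  have hmpos : 0 < m := by rw [← hm]; exact_mod_cast hqpos
  have hnegp : ‖(-(p:L))‖ = (p:ℝ)⁻¹ := by rw [norm_neg, hpL]
  have hNpos : 0 < q.num := Rat.num_pos.mpr hqpos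
  have hNtpos : 0 < q.num.toNat := by omega
  have hN : ((q.num.toNat : ℝ)) = (q.num : ℝ) := by exact_mod_cast Int.toNat_of_nonneg hNpos.le
  have hπnorm : ‖πs‖ = (p:ℝ) ^ (-(1/m)) := by
    have h1 : ‖πs‖ ^ q.num.toNat = ((p:ℝ)⁻¹) ^ q.den := by
      rw [← norm_pow, hπs, norm_pow, hnegp]
    have hqR : (q:ℝ) ≠ 0 := by positivity
    have hdiv : (q.num:ℝ) / (q:ℝ) = (q.den:ℝ) := by
      rw [Rat.cast_def]
      field_simp
    have h2 : ((p:ℝ) ^ (-(1/m))) ^ q.num.toNat = ((p:ℝ)⁻¹) ^ q.den := by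
      rw [← Real.rpow_natCast ((p:ℝ) ^ (-(1/m))) _, ← Real.rpow_mul hp0.le]
      have he : (-(1/m)) * (q.num.toNat : ℝ) = -(q.den : ℝ) := by
        rw [hN, ← hm, ← hdiv]; field_simp
      rw [he, Real.rpow_neg hp0.le, Real.rpow_natCast, inv_pow]
    have h3 : ‖πs‖ ^ q.num.toNat = ((p:ℝ) ^ (-(1/m))) ^ q.num.toNat := by rw [h1, h2]
    have := pow_left_strictMonoOn₀ (n := q.num.toNat) (M₀ := ℝ) hNtpos.ne'
    exact this.injOn (Set.mem_Ici.mpr (norm_nonneg _))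
      (Set.mem_Ici.mpr (Real.rpow_pos_of_pos hp0 _).le) h3
  have hπpos : 0 < ‖πs‖ := hπnorm ▸ Real.rpow_pos_of_pos hp0 _
  have hπ_ne : πs ≠ 0 := norm_pos_iff.mp hπpos
  have hsymm : ∀ b : L, ‖autL.symm b‖ = ‖b‖ := fun b => by
    conv_rhs => rw [← autL.apply_symm_apply b]
    rw [hautL]
  set z : ℤ → L := fun j => (πs ^ ((p-1)*n))⁻¹ * autL.symm (πs ^ (p*n) * x ((p:ℤ)*j + n))
    with hzdef
  have hznorm : ∀ j : ℤ, ‖z j‖ = ‖πs‖ ^ n * ‖x ((p:ℤ)*j + n)‖ := by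
    intro j
    rw [hzdef]
    simp only [norm_mul, norm_inv, hsymm, norm_mul, norm_pow]
    have hpow : ‖πs‖ ^ (p*n) = ‖πs‖ ^ n * ‖πs‖ ^ ((p-1)*n) := by
      rw [← pow_add]; congr 1
      have : 1 ≤ p := hp1
      cases' Nat.exists_eq_add_of_le this with c hc
      subst hc; rw [Nat.add_sub_cancel_left]; ring
    rw [hpow]
    field_simp
  have hπn_le1 : ‖πs‖ ^ n ≤ 1 := pow_le_one₀ hπpos.le hπs_int
  have hz_le_x : ∀ j : ℤ, ‖z j‖ ≤ ‖x ((p:ℤ)*j + n)‖ := by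
    intro j
    rw [hznorm j]
    calc ‖πs‖ ^ n * ‖x ((p:ℤ)*j + n)‖ ≤ 1 * ‖x ((p:ℤ)*j + n)‖ :=
          mul_le_mul_of_nonneg_right hπn_le1 (norm_nonneg _)
      _ = ‖x ((p:ℤ)*j + n)‖ := one_mul _
  refine ⟨z, ⟨⟨⟨1, fun j => le_trans (hz_le_x j) (hle1 _)⟩, ?_⟩,
    fun j => le_trans (hz_le_x j) (hle1 _), ?_⟩, ?_⟩
  · -- tail condition
    intro ε hε
    obtain ⟨N, hNx⟩ := htail ε hε
    refine ⟨min (N - n) 0, fun j hj => ?_⟩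
    have hj0 : j ≤ 0 := le_trans hj (min_le_right _ _)
    have hjN : j ≤ N - n := le_trans hj (min_le_left _ _)
    have hpj : (p:ℤ)*j ≤ 1*j := by
      apply mul_le_mul_of_nonpos_right _ hj0
      exact_mod_cast hp1
    have h1 : (p:ℤ)*j + n ≤ N := by omega
    exact le_trans (hz_le_x j) (hNx _ h1)
  · -- valuation condition
    intro k j hk
    set k' : ℚ := k - (n:ℚ) / q with hk'def
    have hk'cast : (k' : ℝ) = (k:ℝ) - (n:ℝ) / m := by
      rw [hk'def]; push_cast [hm]; ring
    have hxe : (p:ℝ) ^ (-(k':ℝ)) ≤ ‖x ((p:ℤ)*j + n)‖ := by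
      rw [hznorm j, hπnorm, ← Real.rpow_natCast ((p:ℝ) ^ (-(1/m))) n,
        ← Real.rpow_mul hp0.le] at hk
      have hpow : (p:ℝ) ^ (-(k':ℝ)) = (p:ℝ) ^ (-(k:ℝ)) / (p:ℝ) ^ (-(1/m) * (n:ℝ)) := by
        rw [← Real.rpow_sub hp0]; congr 1; rw [hk'cast]; ring
      rw [hpow, div_le_iff₀ (Real.rpow_pos_of_pos hp0 _)]
      calc (p:ℝ) ^ (-(k:ℝ)) ≤ (p:ℝ) ^ (-(1/m) * (n:ℝ)) * ‖x ((p:ℤ)*j + n)‖ := hk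
        _ = ‖x ((p:ℤ)*j + n)‖ * (p:ℝ) ^ (-(1/m) * (n:ℝ)) := mul_comm _ _
    have hv := hval k' ((p:ℤ)*j + n) hxe
    push_cast at hv
    rw [hk'cast] at hv
    have hnm : (n:ℝ) / m * m = (n:ℝ) := div_mul_cancel₀ _ hmpos.ne'
    have hkey : -(k:ℝ) * m ≤ (p:ℝ) * (j:ℝ) := by nlinarith
    have : -(k:ℝ) * (m / (p:ℝ)) ≤ (j:ℝ) := by
      rw [mul_div_assoc'] at *
      rw [div_le_iff₀ hp0]
      nlinarith
    linarith
  · -- equality of functions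
    funext j
    show autL.symm (πs ^ (p*n) * x ((p:ℤ)*j + n)) = πs ^ ((p-1)*n) * z j
    rw [hzdef]
    field_simp


end AmiceStmt
end
end

section
/- One has F ∈ 𝒪_ℰ^{p(p−1)}(−p); that is, F has all coefficients in 𝒪_L, F^{p−1} = (t^{p−1}+1)^p − 1, and w_k(F) ≥ −k·p·(p−1) + p for all k ∈ ℚ. -/
open Filter Topology

noncomputable section

namespace AmiceStmt

variable {L : Type*} [NormedField L]

/-! ### Auxiliary material -/

section Aux

open PowerSeries Finset

variable {K : Type*} [NormedField K] [IsUltrametricDist K]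

lemma aux_norm_sub_le_max (a b : K) : ‖a - b‖ ≤ max ‖a‖ ‖b‖ := by
  rw [sub_eq_add_neg]
  simpa [norm_neg] using IsUltrametricDist.norm_add_le_max a (-b)

lemma aux_norm_one_add {x : K} (h : ‖x‖ < 1) : ‖1 + x‖ = 1 := by
  apply le_antisymm
  · exact (IsUltrametricDist.norm_add_le_max 1 x).trans (by simp [le_of_lt h])
  · by_contra hlt
    push_neg at hlt
    have h2 : ‖(1 : K)‖ ≤ max ‖1 + x‖ ‖x‖ := by
      simpa using aux_norm_sub_le_max (1 + x) x
    rw [norm_one] at h2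
    rcases max_cases ‖1 + x‖ ‖x‖ with ⟨h1, _⟩ | ⟨h1, _⟩ <;> rw [h1] at h2 <;> linarith

variable {p : ℕ}

lemma aux_norm_p_lt_one (hp : p.Prime) (hpL : ‖(p : K)‖ = (p : ℝ)⁻¹) : ‖(p : K)‖ < 1 := by
  rw [hpL]
  rw [inv_lt_one_iff₀]
  right
  exact_mod_cast hp.one_lt

lemma aux_norm_coprime (hp : p.Prime) (hpL : ‖(p : K)‖ = (p : ℝ)⁻¹) {m : ℕ}
    (hm : ¬ p ∣ m) : ‖(m : K)‖ = 1 := by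
  haveI : Fact p.Prime := ⟨hp⟩
  have hz : ((m : ZMod p)) ≠ 0 := by
    simpa [ZMod.natCast_eq_zero_iff] using hm
  have h1 : ((m : ZMod p)) ^ (p - 1) = 1 := ZMod.pow_card_sub_one_eq_one hz
  have hdvd : (p : ℤ) ∣ ((m : ℤ) ^ (p - 1) - 1) := by
    have h0 : (((m : ℤ) ^ (p - 1) - 1 : ℤ) : ZMod p) = 0 := by push_cast [h1]; ring
    exact_mod_cast (ZMod.intCast_zmod_eq_zero_iff_dvd _ p).mp h0
  obtain ⟨c, hc⟩ := hdvd
  have hL : (m : K) ^ (p - 1) = 1 + (p : K) * (c : K) := by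
    have h3 : ((m : ℤ) ^ (p - 1) : ℤ) = 1 + p * c := by linarith [hc]
    exact_mod_cast congrArg (fun z : ℤ => (z : K)) h3
  have hnorm : ‖(m : K) ^ (p - 1)‖ = 1 := by
    rw [hL]
    apply aux_norm_one_add
    rw [norm_mul]
    calc ‖(p : K)‖ * ‖(c : K)‖ ≤ ‖(p : K)‖ * 1 :=
          mul_le_mul_of_nonneg_left (IsUltrametricDist.norm_intCast_le_one K c) (norm_nonneg _)
      _ = ‖(p : K)‖ := mul_one _
      _ < 1 := aux_norm_p_lt_one hp hpL
  have hn1 : p - 1 ≠ 0 := by have := hp.two_le; omega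
  rw [norm_pow] at hnorm
  rcases lt_trichotomy ‖(m : K)‖ 1 with h | h | h
  · have := pow_lt_one₀ (norm_nonneg _) h hn1
    rw [hnorm] at this; linarith
  · exact h
  · have := one_lt_pow₀ h hn1
    rw [hnorm] at this; linarith

lemma aux_norm_nat_pos (hp : p.Prime) (hpL : ‖(p : K)‖ = (p : ℝ)⁻¹) {n : ℕ} (hn : n ≠ 0) :
    0 < ‖(n : K)‖ := by
  have hfac := Nat.ordProj_mul_ordCompl_eq_self n p
  set k := n.factorization p
  set m := n / p ^ k with hm
  have hmc : ¬ p ∣ m := Nat.not_dvd_ordCompl hp hn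
  have hcast : (n : K) = (p : K) ^ k * (m : K) := by exact_mod_cast (congrArg (fun t : ℕ => (t : K)) hfac).symm
  rw [hcast, norm_mul, norm_pow, hpL, aux_norm_coprime hp hpL hmc, mul_one]
  have hppos : (0 : ℝ) < p := by exact_mod_cast hp.pos
  positivity

lemma aux_charZero (hp : p.Prime) (hpL : ‖(p : K)‖ = (p : ℝ)⁻¹) : CharZero K := by
  apply charZero_of_inj_zero
  intro n h
  by_contra hn
  have := aux_norm_nat_pos hp hpL hn
  rw [h, norm_zero] at this
  exact lt_irrefl _ this

lemma aux_prod_sub (n : ℕ) (a b : ℕ → K) (δ : ℝ) (hδ : 0 ≤ δ)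
    (ha : ∀ i, ‖a i‖ ≤ 1) (hb : ∀ i, ‖b i‖ ≤ 1) (hab : ∀ i, ‖a i - b i‖ ≤ δ) :
    ‖∏ i ∈ Finset.range n, a i - ∏ i ∈ Finset.range n, b i‖ ≤ δ := by
  induction n with
  | zero => simpa using hδ
  | succ n ih =>
    have key : ∏ i ∈ range (n + 1), a i - ∏ i ∈ range (n + 1), b i
        = (∏ i ∈ range n, a i) * (a n - b n)
          + (∏ i ∈ range n, a i - ∏ i ∈ range n, b i) * b n := by
      rw [Finset.prod_range_succ, Finset.prod_range_succ]; ring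
    rw [key]
    refine (IsUltrametricDist.norm_add_le_max _ _).trans (max_le ?_ ?_)
    · rw [norm_mul]
      have h1 : ‖∏ i ∈ range n, a i‖ ≤ 1 := by
        rw [norm_prod]
        exact Finset.prod_le_one (fun i _ => norm_nonneg _) (fun i _ => ha i)
      calc ‖∏ i ∈ range n, a i‖ * ‖a n - b n‖ ≤ 1 * δ :=
            mul_le_mul h1 (hab n) (norm_nonneg _) zero_le_one
        _ = δ := one_mul _
    · rw [norm_mul]
      calc ‖∏ i ∈ range n, a i - ∏ i ∈ range n, b i‖ * ‖b n‖ ≤ δ * 1 :=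
            mul_le_mul ih (hb n) (norm_nonneg _) hδ
        _ = δ := mul_one _

lemma aux_descPoch {R : Type*} [CommRing R] (r : R) (n : ℕ) :
    (descPochhammer R n).eval r = ∏ i ∈ Finset.range n, (r - i) := by
  induction n with
  | zero => simp
  | succ n ih => rw [descPochhammer_succ_eval, ih, Finset.prod_range_succ]

lemma aux_lbinom_eq_choose [CharZero K] (r : K) (n : ℕ) :
    lbinom r n = Ring.choose r n := by
  have h2 : (descPochhammer ℤ n).smeval r = (descPochhammer K n).eval r := by
    rw [Polynomial.descPochhammer_smeval_eq_ascPochhammer,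
      Polynomial.ascPochhammer_smeval_eq_eval, descPochhammer_eval_eq_ascPochhammer]
  have h3 : ∏ i ∈ Finset.range n, (r - (i : K)) = (n.factorial : K) * Ring.choose r n := by
    rw [← aux_descPoch, ← h2, Ring.descPochhammer_eq_factorial_smul_choose, nsmul_eq_mul]
  rw [lbinom, h3]
  exact mul_div_cancel_left₀ _ (by exact_mod_cast (Nat.cast_ne_zero (R := K)).mpr n.factorial_ne_zero)

lemma aux_lbinom_int [CharZero K] (s : ℤ) (n : ℕ) : ‖lbinom ((s : K)) n‖ ≤ 1 := by
  have hcast : lbinom ((s : K)) n = ((Ring.choose s n : ℤ) : K) := by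
    have h1 : ∏ i ∈ Finset.range n, ((s : K) - (i : K))
        = (((descPochhammer ℤ n).eval s : ℤ) : K) := by
      rw [aux_descPoch]
      push_cast
      rfl
    have h2 : (descPochhammer ℤ n).eval s = (n.factorial : ℤ) * Ring.choose s n := by
      rw [Polynomial.eval_eq_smeval, Ring.descPochhammer_eq_factorial_smul_choose,
        nsmul_eq_mul]
    rw [lbinom, h1, h2]
    push_cast
    exact mul_div_cancel_left₀ _ (by exact_mod_cast (Nat.cast_ne_zero (R := K)).mpr n.factorial_ne_zero)
  rw [hcast]
  exact IsUltrametricDist.norm_intCast_le_one K _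

lemma aux_norm_lbinom (hp : p.Prime) (hpL : ‖(p : K)‖ = (p : ℝ)⁻¹) (n : ℕ) :
    ‖lbinom (((p : K) - 1)⁻¹) n‖ ≤ 1 := by
  haveI : CharZero K := aux_charZero hp hpL
  set r : K := ((p : K) - 1)⁻¹ with hr0
  have hp1 : ‖(p : K)‖ < 1 := aux_norm_p_lt_one hp hpL
  have hnp : ‖(p : K) - 1‖ = 1 := by
    have h : (p : K) - 1 = -(1 + -(p : K)) := by ring
    rw [h, norm_neg, aux_norm_one_add (by rw [norm_neg]; exact hp1)]
  have hne : (p : K) - 1 ≠ 0 := by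
    intro h; rw [h, norm_zero] at hnp; norm_num at hnp
  have hr : ‖r‖ = 1 := by rw [hr0, norm_inv, hnp, inv_one]
  have hfact : (0 : ℝ) < ‖((n.factorial : K))‖ :=
    aux_norm_nat_pos hp hpL n.factorial_ne_zero
  have hppos : (0 : ℝ) < p := by exact_mod_cast hp.pos
  have hinv1 : (p : ℝ)⁻¹ < 1 := by
    rw [inv_lt_one_iff₀]; right; exact_mod_cast hp.one_lt
  obtain ⟨k, hk⟩ : ∃ k : ℕ, ((p : ℝ)⁻¹) ^ k < ‖(n.factorial : K)‖ :=
    exists_pow_lt_of_lt_one hfact hinv1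
  set s : ℤ := -(∑ i ∈ Finset.range k, (p : ℤ) ^ i) with hs0
  have hgeom : ((p : K) - 1) * (s : K) = 1 - (p : K) ^ k := by
    have hg := geom_sum_mul ((p : K)) k
    have hcast : ((s : ℤ) : K) = -(∑ i ∈ Finset.range k, (p : K) ^ i) := by
      rw [hs0]; push_cast; ring
    rw [hcast]
    linear_combination -hg
  have hs : r - (s : K) = r * (p : K) ^ k := by
    have h2 : ((p : K) - 1) * (r - (s : K)) = ((p : K) - 1) * (r * (p : K) ^ k) := by
      rw [mul_sub, hgeom]
      rw [show ((p : K) - 1) * r = 1 from mul_inv_cancel₀ hne]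
      rw [show ((p : K) - 1) * (r * (p : K) ^ k) = (((p : K) - 1) * r) * (p : K) ^ k by ring,
        mul_inv_cancel₀ hne]
      ring
    exact mul_left_cancel₀ hne h2
  have hnorm_diff : ‖r - (s : K)‖ = ((p : ℝ)⁻¹) ^ k := by
    rw [hs, norm_mul, hr, one_mul, norm_pow, hpL]
  have hbound : ‖(∏ i ∈ Finset.range n, (r - (i : K)))
      - ∏ i ∈ Finset.range n, ((s : K) - (i : K))‖ ≤ ((p : ℝ)⁻¹) ^ k := by
    apply aux_prod_sub n _ _ _ (by positivity)
    · intro i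
      refine (aux_norm_sub_le_max _ _).trans (max_le (le_of_eq hr) ?_)
      exact IsUltrametricDist.norm_natCast_le_one K i
    · intro i
      have h : (s : K) - (i : K) = (((s - i : ℤ)) : K) := by push_cast; ring
      rw [h]
      exact IsUltrametricDist.norm_intCast_le_one K _
    · intro i
      rw [show r - (i : K) - ((s : K) - (i : K)) = r - (s : K) by ring, hnorm_diff]
  have hsplit : lbinom r n = (lbinom r n - lbinom ((s : K)) n) + lbinom ((s : K)) n := by ring
  rw [hsplit]
  refine (IsUltrametricDist.norm_add_le_max _ _).trans
    (max_le ?_ (aux_lbinom_int s n))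
  have hdiff : lbinom r n - lbinom ((s : K)) n
      = ((∏ i ∈ Finset.range n, (r - (i : K)))
        - ∏ i ∈ Finset.range n, ((s : K) - (i : K))) / (n.factorial : K) := by
    rw [lbinom, lbinom, sub_div]
  rw [hdiff, norm_div]
  exact le_of_lt ((div_lt_one hfact).mpr (lt_of_le_of_lt hbound hk))

end Aux

/-! ### Power-series carriers -/

section Phi

open PowerSeries Finset

variable {K : Type*} [NormedField K]

open scoped Classical in
/-- The element `t^a · f(t^{-q})` of the Amice ring, for a power series `f`. -/
def phiF (q : ℕ) (a : ℤ) (f : PowerSeries K) : ℤ → K := fun j =>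
  if (∃ m : ℕ, j = a - q * m) then PowerSeries.coeff (R := K) ((a - j) / (q : ℤ)).toNat f else 0

lemma phiF_apply {q : ℕ} (hq : 0 < q) (a : ℤ) (f : PowerSeries K) (m : ℕ) :
    phiF q a f (a - q * m) = PowerSeries.coeff (R := K) m f := by
  rw [phiF, if_pos ⟨m, rfl⟩]
  have h : ((a - (a - q * m)) / (q : ℤ)).toNat = m := by
    rw [show a - (a - q * m) = (q : ℤ) * m by ring,
      Int.mul_ediv_cancel_left _ (by exact_mod_cast hq.ne')]
    exact Int.toNat_natCast m
  rw [h]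

lemma phiF_zero {q : ℕ} {a j : ℤ} (f : PowerSeries K) (h : ∀ m : ℕ, j ≠ a - q * m) :
    phiF q a f j = 0 := by
  rw [phiF, if_neg]
  rintro ⟨m, rfl⟩
  exact h m rfl

lemma phiF_cases {q : ℕ} (hq : 0 < q) (a j : ℤ) (f : PowerSeries K) :
    (∃ m : ℕ, j = a - q * m ∧ phiF q a f j = PowerSeries.coeff (R := K) m f) ∨
      (phiF q a f j = 0 ∧ ∀ m : ℕ, j ≠ a - q * m) := by
  by_cases h : ∃ m : ℕ, j = a - q * m
  · obtain ⟨m, rfl⟩ := h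
    exact Or.inl ⟨m, rfl, phiF_apply hq a f m⟩
  · push_neg at h
    exact Or.inr ⟨phiF_zero f h, h⟩

lemma mulE_phiF {q : ℕ} (hq : 0 < q) (a b : ℤ) (f g : PowerSeries K) :
    mulE (phiF q a f) (phiF q b g) = phiF q (a + b) (f * g) := by
  have hqZ : (q : ℤ) ≠ 0 := by exact_mod_cast hq.ne'
  funext j
  show (∑' k : ℤ, phiF q a f k * phiF q b g (j - k)) = _
  by_cases hj : ∃ m : ℕ, j = (a + b) - q * m
  · obtain ⟨m, rfl⟩ := hj
    have hzero : ∀ k : ℤ, k ∉ (Finset.range (m + 1)).image (fun i : ℕ => a - q * i) →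
        phiF q a f k * phiF q b g (a + b - q * m - k) = 0 := by
      intro k hk
      rcases phiF_cases hq a k f with ⟨i, rfl, _⟩ | ⟨hv, _⟩
      · rcases phiF_cases hq b (a + b - q * m - (a - q * i)) g with ⟨l, hl, _⟩ | ⟨hv2, _⟩
        · exfalso
          apply hk
          have him : (i : ℤ) + l = m := by
            have h1 : (q : ℤ) * m = q * i + q * l := by linarith [hl]
            have h2 : (q : ℤ) * ((i : ℤ) + l) = (q : ℤ) * m := by linarith [h1]
            exact mul_left_cancel₀ hqZ h2
          have him' : i ≤ m := by
            have h3 : (i : ℤ) ≤ m := by linarith [him, Int.ofNat_nonneg l]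
            exact_mod_cast h3
          exact Finset.mem_image.mpr ⟨i, Finset.mem_range.mpr (by omega), rfl⟩
        · rw [hv2, mul_zero]
      · rw [hv, zero_mul]
    have hinj : ∀ x ∈ Finset.range (m + 1), ∀ y ∈ Finset.range (m + 1),
        a - (q : ℤ) * (x : ℕ) = a - (q : ℤ) * (y : ℕ) → x = y := by
      intro x _ y _ hxy
      have h1 : (q : ℤ) * x = q * y := by linarith [hxy]
      exact_mod_cast mul_left_cancel₀ hqZ h1
    rw [tsum_eq_sum (s := (Finset.range (m + 1)).image (fun i : ℕ => a - q * i))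
      (fun k hk => hzero k hk), Finset.sum_image hinj]
    rw [phiF_apply hq (a + b) (f * g) m, PowerSeries.coeff_mul,
      Finset.Nat.sum_antidiagonal_eq_sum_range_succ
        (fun i l => PowerSeries.coeff (R := K) i f * PowerSeries.coeff (R := K) l g)]
    apply Finset.sum_congr rfl
    intro i hi
    have hi' : i ≤ m := by simpa [Nat.lt_succ_iff] using hi
    rw [phiF_apply hq a f i]
    congr 1
    rw [show a + b - q * m - (a - q * i) = b - q * (((m - i : ℕ) : ℤ)) by
      push_cast [hi']; ring]
    rw [phiF_apply hq b g (m - i)]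
  · push_neg at hj
    have h0 : ∀ k : ℤ, phiF q a f k * phiF q b g (j - k) = 0 := by
      intro k
      rcases phiF_cases hq a k f with ⟨i, rfl, _⟩ | ⟨hv, _⟩
      · rcases phiF_cases hq b (j - (a - q * i)) g with ⟨l, hl, _⟩ | ⟨hv2, _⟩
        · exfalso
          refine (hj (i + l)) ?_
          push_cast
          linarith [hl]
        · rw [hv2, mul_zero]
      · rw [hv, zero_mul]
    rw [show (fun k : ℤ => phiF q a f k * phiF q b g (j - k)) = fun _ => (0 : K) from
      funext h0, tsum_zero]
    exact (phiF_zero (f * g) hj).symm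

lemma oneE_phiF {q : ℕ} (hq : 0 < q) : (oneE : ℤ → K) = phiF q 0 1 := by
  funext j
  rcases phiF_cases hq 0 j (1 : PowerSeries K) with ⟨m, rfl, hv⟩ | ⟨hv, hm⟩
  · rw [hv, PowerSeries.coeff_one]
    by_cases hm0 : m = 0
    · subst hm0; simp [oneE]
    · have hne : (0 : ℤ) - q * m ≠ 0 := by
        have h1 : 0 < m := Nat.pos_of_ne_zero hm0
        have h2 : 0 < (q : ℤ) * m := by
          have : (0:ℤ) < q := by exact_mod_cast hq
          have : (0:ℤ) < m := by exact_mod_cast h1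
          positivity
        omega
      rw [if_neg hm0]
      simp only [oneE, if_neg hne]
  · rw [hv, oneE, if_neg]
    intro h0
    exact hm 0 (by rw [h0]; simp)

lemma powE_phiF {q : ℕ} (hq : 0 < q) (a : ℤ) (f : PowerSeries K) (n : ℕ) :
    powE (phiF q a f) n = phiF q ((n : ℤ) * a) (f ^ n) := by
  induction n with
  | zero => simpa [powE, pow_zero] using oneE_phiF hq
  | succ n ih =>
    show mulE _ _ = _
    rw [ih, mulE_phiF hq]
    rw [show a + (n : ℤ) * a = ((n + 1 : ℕ) : ℤ) * a by push_cast; ring,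
      ← pow_succ']

end Phi


/-! ### The series `Y`, `D_r`, and their algebra -/

section Series

open PowerSeries Finset

variable {K : Type*} [NormedField K] [IsUltrametricDist K] {p : ℕ}

/-- `y` as a power series in `u = t^{-(p-1)}`. -/
def Yser (K : Type*) [NormedField K] (p : ℕ) : PowerSeries K :=
  PowerSeries.mk fun m => if 1 ≤ m ∧ m ≤ p - 1 then (p.choose (p - m) : K) / (p : K) else 0

lemma Yser_const : constantCoeff (R := K) (Yser K p) = 0 := by
  have h : constantCoeff (R := K) (Yser K p) = PowerSeries.coeff (R := K) 0 (Yser K p) := by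
    rw [PowerSeries.coeff_zero_eq_constantCoeff]
  rw [h, Yser, PowerSeries.coeff_mk]
  norm_num

lemma yF_phiF (hp3 : 3 ≤ p) : (yF p : ℤ → K) = phiF (p - 1) 0 (Yser K p) := by
  have hq : 0 < p - 1 := by omega
  have hp1 : 1 ≤ p := by omega
  funext j
  rcases phiF_cases hq 0 j (Yser K p) with ⟨m, rfl, hv⟩ | ⟨hv, hm⟩
  · rw [hv, Yser, PowerSeries.coeff_mk, yF]
    by_cases hm' : 1 ≤ m ∧ m ≤ p - 1
    · rw [if_pos hm']
      rw [Finset.sum_eq_single_of_mem (p - m) (Finset.mem_Ico.mpr (by omega))]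
      · rw [if_pos (by push_cast [Nat.cast_sub hp1, Nat.cast_sub (show m ≤ p by omega)]; ring)]
      · intro i hi hne
        have hi' := Finset.mem_Ico.mp hi
        rw [if_neg]
        intro hcon
        have h2 : ((p : ℤ) - 1) * ((i : ℤ) - p + m) = 0 := by
          push_cast [Nat.cast_sub hp1] at hcon
          linarith [hcon]
        rcases mul_eq_zero.mp h2 with h | h
        · have h3 : (3 : ℤ) ≤ p := by exact_mod_cast hp3
          linarith
        · exact hne (by omega)
    · rw [if_neg hm']
      apply Finset.sum_eq_zero
      intro i hi
      have hi' := Finset.mem_Ico.mp hi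
      rw [if_neg]
      intro hcon
      have h2 : ((p : ℤ) - 1) * ((i : ℤ) - p + m) = 0 := by
        push_cast [Nat.cast_sub hp1] at hcon
        linarith [hcon]
      rcases mul_eq_zero.mp h2 with h | h
      · have h3 : (3 : ℤ) ≤ p := by exact_mod_cast hp3
        linarith
      · omega
  · rw [hv, yF]
    apply Finset.sum_eq_zero
    intro i hi
    have hi' := Finset.mem_Ico.mp hi
    rw [if_neg]
    intro hcon
    apply hm (p - i)
    rw [hcon]
    push_cast [Nat.cast_sub hp1, Nat.cast_sub (le_of_lt hi'.2)]
    ring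

/-- The binomial-type series `∑ C(r,n) aⁿ` for `a` with zero constant term. -/
def DserF (r : K) (a : PowerSeries K) : PowerSeries K :=
  PowerSeries.mk fun m =>
    ∑ n ∈ Finset.range (m + 1), lbinom r n * PowerSeries.coeff (R := K) m (a ^ n)

lemma coeff_pow_zero {a : PowerSeries K} (ha : constantCoeff (R := K) a = 0) {m n : ℕ} (h : m < n) :
    PowerSeries.coeff (R := K) m (a ^ n) = 0 :=
  PowerSeries.X_pow_dvd_iff.mp (pow_dvd_pow_of_dvd (PowerSeries.X_dvd_iff.mpr ha) n) m h

lemma coeff_DserF {r : K} {a : PowerSeries K} (ha : constantCoeff (R := K) a = 0) {u M : ℕ}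
    (hu : u ≤ M) :
    PowerSeries.coeff (R := K) u (DserF r a)
      = ∑ n ∈ Finset.range (M + 1), lbinom r n * PowerSeries.coeff (R := K) u (a ^ n) := by
  rw [DserF, PowerSeries.coeff_mk]
  apply Finset.sum_subset (Finset.range_subset_range.mpr (by omega))
  intro x hx hnx
  rw [coeff_pow_zero ha (by simp only [Finset.mem_range] at hx hnx; omega), mul_zero]

lemma aux_triangle {M : Type*} [AddCommMonoid M] (m : ℕ) (c : ℕ → ℕ → M)
    (hc : ∀ n k, m < n + k → c n k = 0) :
    ∑ n ∈ Finset.range (m + 1), ∑ k ∈ Finset.range (m + 1), c n k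
      = ∑ N ∈ Finset.range (m + 1), ∑ ij ∈ Finset.HasAntidiagonal.antidiagonal N, c ij.1 ij.2 := by
  rw [← Finset.sum_product']
  rw [← Finset.sum_filter_of_ne
    (p := fun x : ℕ × ℕ => x.1 + x.2 ≤ m)
    (fun x _ hx => by by_contra h; exact hx (hc x.1 x.2 (by omega)))]
  rw [Finset.sum_sigma']
  refine (Finset.sum_nbij' (i := fun y : (_ : ℕ) × (ℕ × ℕ) => y.2)
    (j := fun x : ℕ × ℕ => ⟨x.1 + x.2, x⟩) ?_ ?_ ?_ ?_ ?_).symm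
  · intro y hy
    simp only [Finset.mem_sigma, Finset.mem_range, Finset.HasAntidiagonal.mem_antidiagonal] at hy
    simp only [Finset.mem_filter, Finset.mem_product, Finset.mem_range]
    omega
  · intro x hx
    simp only [Finset.mem_filter, Finset.mem_product, Finset.mem_range] at hx
    exact Finset.mem_sigma.mpr ⟨Finset.mem_range.mpr (Nat.lt_succ_of_le hx.2),
      Finset.HasAntidiagonal.mem_antidiagonal.mpr rfl⟩
  · intro y hy
    simp only [Finset.mem_sigma, Finset.mem_range, Finset.HasAntidiagonal.mem_antidiagonal] at hy
    exact Sigma.ext (by simp [hy.2]) (by simp)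
  · intro x _
    rfl
  · intro y _
    rfl

lemma DserF_mul [CharZero K] {a : PowerSeries K} (ha : constantCoeff (R := K) a = 0) (r s : K) :
    DserF r a * DserF s a = DserF (r + s) a := by
  ext m
  have key : PowerSeries.coeff (R := K) m (DserF r a * DserF s a)
      = ∑ n ∈ Finset.range (m + 1), ∑ k ∈ Finset.range (m + 1),
          lbinom r n * lbinom s k * PowerSeries.coeff (R := K) m (a ^ (n + k)) := by
    rw [PowerSeries.coeff_mul]
    have hsum : ∀ x ∈ Finset.HasAntidiagonal.antidiagonal m,
        PowerSeries.coeff (R := K) x.1 (DserF r a) * PowerSeries.coeff (R := K) x.2 (DserF s a)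
          = ∑ n ∈ Finset.range (m + 1), ∑ k ∈ Finset.range (m + 1),
              lbinom r n * PowerSeries.coeff (R := K) x.1 (a ^ n)
                * (lbinom s k * PowerSeries.coeff (R := K) x.2 (a ^ k)) := by
      intro x hx
      rw [coeff_DserF ha (Finset.HasAntidiagonal.antidiagonal.fst_le hx),
        coeff_DserF ha (Finset.HasAntidiagonal.antidiagonal.snd_le hx), Finset.sum_mul_sum]
    rw [Finset.sum_congr rfl hsum]
    rw [Finset.sum_comm]
    apply Finset.sum_congr rfl
    intro n _
    rw [Finset.sum_comm]
    apply Finset.sum_congr rfl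
    intro k _
    have hexp : ∀ x ∈ Finset.HasAntidiagonal.antidiagonal m,
        lbinom r n * PowerSeries.coeff (R := K) x.1 (a ^ n)
            * (lbinom s k * PowerSeries.coeff (R := K) x.2 (a ^ k))
          = lbinom r n * lbinom s k
              * (PowerSeries.coeff (R := K) x.1 (a ^ n) * PowerSeries.coeff (R := K) x.2 (a ^ k)) := by
      intro x _; ring
    rw [Finset.sum_congr rfl hexp, ← Finset.mul_sum, ← PowerSeries.coeff_mul, ← pow_add]
  rw [key, DserF, PowerSeries.coeff_mk]
  have hvan : ∀ N, lbinom (r + s) N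
      = ∑ ij ∈ Finset.HasAntidiagonal.antidiagonal N, lbinom r ij.1 * lbinom s ij.2 := by
    intro N
    rw [aux_lbinom_eq_choose, Ring.add_choose_eq N (Commute.all r s)]
    exact Finset.sum_congr rfl fun ij _ => by rw [aux_lbinom_eq_choose, aux_lbinom_eq_choose]
  rw [aux_triangle m _ (fun n k h => by rw [coeff_pow_zero ha h, mul_zero])]
  apply Finset.sum_congr rfl
  intro N hN
  have hcoe : ∀ ij ∈ Finset.HasAntidiagonal.antidiagonal N,
      lbinom r ij.1 * lbinom s ij.2 * PowerSeries.coeff (R := K) m (a ^ (ij.1 + ij.2))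
        = lbinom r ij.1 * lbinom s ij.2 * PowerSeries.coeff (R := K) m (a ^ N) := by
    intro ij hij
    rw [Finset.HasAntidiagonal.mem_antidiagonal.mp hij]
  rw [Finset.sum_congr rfl hcoe, ← Finset.sum_mul, ← hvan N]

lemma DserF_pow [CharZero K] {a : PowerSeries K} (ha : constantCoeff (R := K) a = 0) (r : K) (k : ℕ) :
    DserF r a ^ (k + 1) = DserF (((k + 1 : ℕ) : K) * r) a := by
  induction k with
  | zero => norm_num
  | succ k ih =>
    rw [pow_succ, ih, DserF_mul ha,
      show (((k + 1 : ℕ) : K) * r + r) = ((k + 1 + 1 : ℕ) : K) * r by push_cast; ring]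

lemma lbinom_one [CharZero K] (n : ℕ) : lbinom (1 : K) n = if n ≤ 1 then 1 else 0 := by
  rw [aux_lbinom_eq_choose, show (1 : K) = ((1 : ℕ) : K) by norm_num, Ring.choose_natCast]
  match n with
  | 0 => simp
  | 1 => simp
  | (n + 2) =>
    rw [Nat.choose_eq_zero_of_lt (show 1 < n + 2 by omega), if_neg (by omega)]
    simp

lemma DserF_one [CharZero K] {a : PowerSeries K} (ha : constantCoeff (R := K) a = 0) :
    DserF (1 : K) a = 1 + a := by
  ext m
  rw [DserF, PowerSeries.coeff_mk, map_add, PowerSeries.coeff_one]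
  match m with
  | 0 =>
    rw [Finset.sum_range_one, lbinom_one, pow_zero, if_pos rfl, if_pos (by norm_num)]
    rw [show (PowerSeries.coeff (R := K) 0) a = 0 from by
      rw [PowerSeries.coeff_zero_eq_constantCoeff_apply, ha]]
    simp
  | (m + 1) =>
    rw [Finset.sum_eq_single 1]
    · rw [lbinom_one, pow_one, if_pos (by norm_num)]
      simp
    · intro n hn hne
      match n with
      | 0 => rw [pow_zero, PowerSeries.coeff_one, if_neg (by omega), mul_zero]
      | 1 => exact absurd rfl hne
      | (n + 2) => rw [lbinom_one, if_neg (by omega), zero_mul]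
    · intro h1
      exact absurd (Finset.mem_range.mpr (by omega)) h1

end Series


/-! ### Identification of `F` and `G`, and coefficient bounds -/

section FG

open PowerSeries Finset

variable {K : Type*} [NormedField K] [IsUltrametricDist K] {p : ℕ}

lemma coeff_oneAddSmul (hpne : (p : K) ≠ 0) (hp3 : 3 ≤ p) (m : ℕ) :
    PowerSeries.coeff (R := K) m (1 + (p : K) • Yser K p)
      = if m ≤ p - 1 then (p.choose (p - m) : K) else 0 := by
  rw [map_add, PowerSeries.coeff_one, map_smul, smul_eq_mul, Yser, PowerSeries.coeff_mk]
  by_cases h0 : m = 0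
  · subst h0
    rw [if_pos rfl, if_neg (by omega), if_pos (by omega), mul_zero, add_zero,
      Nat.sub_zero, Nat.choose_self, Nat.cast_one]
  · by_cases h1 : m ≤ p - 1
    · rw [if_neg h0, if_pos ⟨by omega, h1⟩, if_pos h1, zero_add, mul_comm,
        div_mul_cancel₀ _ hpne]
    · rw [if_neg h0, if_neg (by omega), if_neg h1, mul_zero, add_zero]

lemma GE_phiF (hp3 : 3 ≤ p) (hpne : (p : K) ≠ 0) :
    (GE p : ℤ → K) = phiF (p - 1) ((p : ℤ) * ((p : ℤ) - 1)) (1 + (p : K) • Yser K p) := by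
  have hq : 0 < p - 1 := by omega
  have hp1 : 1 ≤ p := by omega
  have hp3' : (3 : ℤ) ≤ p := by exact_mod_cast hp3
  funext j
  rcases phiF_cases hq ((p : ℤ) * ((p : ℤ) - 1)) j (1 + (p : K) • Yser K p) with
    ⟨m, rfl, hv⟩ | ⟨hv, hm⟩
  · rw [hv, coeff_oneAddSmul hpne hp3, GE]
    by_cases hmle : m ≤ p - 1
    · rw [if_pos hmle]
      rw [Finset.sum_eq_single_of_mem (p - m) (Finset.mem_Icc.mpr (by omega))]
      · rw [if_pos (by push_cast [Nat.cast_sub hp1, Nat.cast_sub (show m ≤ p by omega)]; ring)]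
      · intro i hi hne
        have hi' := Finset.mem_Icc.mp hi
        rw [if_neg]
        intro hcon
        have h2 : ((p : ℤ) - 1) * ((p : ℤ) - (m : ℤ) - (i : ℤ)) = 0 := by
          push_cast [Nat.cast_sub hp1] at hcon
          linarith [hcon]
        rcases mul_eq_zero.mp h2 with h | h
        · linarith
        · exact hne (by omega)
    · rw [if_neg hmle]
      apply Finset.sum_eq_zero
      intro i hi
      have hi' := Finset.mem_Icc.mp hi
      rw [if_neg]
      intro hcon
      have h2 : ((p : ℤ) - 1) * ((p : ℤ) - (m : ℤ) - (i : ℤ)) = 0 := by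
        push_cast [Nat.cast_sub hp1] at hcon
        linarith [hcon]
      rcases mul_eq_zero.mp h2 with h | h
      · linarith
      · omega
  · rw [hv, GE]
    apply Finset.sum_eq_zero
    intro i hi
    have hi' := Finset.mem_Icc.mp hi
    rw [if_neg]
    intro hcon
    apply hm (p - i)
    rw [hcon]
    push_cast [Nat.cast_sub hp1, Nat.cast_sub hi'.2]
    ring

lemma FE_phiF [CharZero K] (hp3 : 3 ≤ p) :
    (FE p : ℤ → K)
      = phiF (p - 1) (p : ℤ) (DserF (((p : K) - 1)⁻¹) ((p : K) • Yser K p)) := by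
  have hq : 0 < p - 1 := by omega
  have hconstY : constantCoeff (R := K) (Yser K p) = 0 := Yser_const
  have hconst : constantCoeff (R := K) ((p : K) • Yser K p) = 0 := by
    rw [← PowerSeries.coeff_zero_eq_constantCoeff_apply, map_smul, smul_eq_mul,
      PowerSeries.coeff_zero_eq_constantCoeff_apply, hconstY, mul_zero]
  funext j
  show (∑' n : ℕ, lbinom (((p : K) - 1)⁻¹) n * (p : K) ^ n * powE (yF p) n (j - (p : ℤ))) = _
  have hypow : ∀ n : ℕ, powE (yF p : ℤ → K) n = phiF (p - 1) 0 ((Yser K p) ^ n) := by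
    intro n
    rw [yF_phiF hp3, powE_phiF hq, mul_zero]
  rcases phiF_cases hq (p : ℤ) j (DserF (((p : K) - 1)⁻¹) ((p : K) • Yser K p)) with
    ⟨m, rfl, hv⟩ | ⟨hv, hm⟩
  · rw [hv]
    have harg : ∀ i : ℕ, (p : ℤ) - (p - 1 : ℕ) * (m : ℕ) - (p : ℤ)
        = 0 - ((p - 1 : ℕ) : ℤ) * (m : ℕ) := fun _ => by ring
    rw [tsum_eq_sum (s := Finset.range (m + 1)) (by
      intro n hn
      rw [hypow n, show (p : ℤ) - (p - 1 : ℕ) * (m : ℕ) - (p : ℤ)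
          = 0 - ((p - 1 : ℕ) : ℤ) * (m : ℕ) by ring, phiF_apply hq,
        coeff_pow_zero hconstY (by simpa [Nat.lt_succ_iff] using hn), mul_zero])]
    rw [DserF, PowerSeries.coeff_mk]
    apply Finset.sum_congr rfl
    intro n _
    rw [hypow n, show (p : ℤ) - (p - 1 : ℕ) * (m : ℕ)  - (p : ℤ)
        = 0 - ((p - 1 : ℕ) : ℤ) * (m : ℕ) by ring, phiF_apply hq]
    rw [smul_pow, map_smul, smul_eq_mul]
    ring
  · rw [hv]
    rw [show (fun n : ℕ => lbinom (((p : K) - 1)⁻¹) n * (p : K) ^ n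
        * powE (yF p) n (j - (p : ℤ))) = fun _ => (0 : K) from funext fun n => by
      rw [hypow n, phiF_zero _ (fun i hi => hm i (by omega)), mul_zero], tsum_zero]

lemma Yser_norm_le (hp : p.Prime) (hpL : ‖(p : K)‖ = (p : ℝ)⁻¹) (m : ℕ) :
    ‖PowerSeries.coeff (R := K) m (Yser K p)‖ ≤ 1 := by
  rw [Yser, PowerSeries.coeff_mk]
  split
  · next h =>
    obtain ⟨c, hc⟩ : p ∣ p.choose (p - m) := hp.dvd_choose_self (by omega) (by omega)
    have hpne : (p : K) ≠ 0 := by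
      intro h0; rw [h0, norm_zero] at hpL
      have : (0 : ℝ) < (p : ℝ)⁻¹ := by
        have : (0 : ℝ) < p := by exact_mod_cast hp.pos
        positivity
      linarith [this, hpL.symm.le]
    rw [hc]
    push_cast
    rw [mul_comm, mul_div_assoc, div_self hpne, mul_one]
    exact IsUltrametricDist.norm_natCast_le_one K c
  · simp

lemma coeff_mul_norm_le {f g : PowerSeries K}
    (hf : ∀ m, ‖PowerSeries.coeff (R := K) m f‖ ≤ 1) (hg : ∀ m, ‖PowerSeries.coeff (R := K) m g‖ ≤ 1)
    (m : ℕ) : ‖PowerSeries.coeff (R := K) m (f * g)‖ ≤ 1 := by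
  rw [PowerSeries.coeff_mul]
  apply IsUltrametricDist.norm_sum_le_of_forall_le_of_nonneg zero_le_one
  intro x _
  rw [norm_mul]
  exact mul_le_one₀ (hf x.1) (norm_nonneg _) (hg x.2)

lemma coeff_pow_norm_le {f : PowerSeries K}
    (hf : ∀ m, ‖PowerSeries.coeff (R := K) m f‖ ≤ 1) (n : ℕ) (m : ℕ) :
    ‖PowerSeries.coeff (R := K) m (f ^ n)‖ ≤ 1 := by
  induction n generalizing m with
  | zero =>
    rw [pow_zero, PowerSeries.coeff_one]
    split <;> simp
  | succ n ih =>
    rw [pow_succ]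
    exact coeff_mul_norm_le (fun u => ih u) hf m

lemma coeff_mul_deg {f g : PowerSeries K} {d e : ℕ}
    (hf : ∀ j, d < j → PowerSeries.coeff (R := K) j f = 0)
    (hg : ∀ j, e < j → PowerSeries.coeff (R := K) j g = 0) :
    ∀ j, d + e < j → PowerSeries.coeff (R := K) j (f * g) = 0 := by
  intro j hj
  rw [PowerSeries.coeff_mul]
  apply Finset.sum_eq_zero
  intro x hx
  have hx' := Finset.HasAntidiagonal.mem_antidiagonal.mp hx
  by_cases h : d < x.1
  · rw [hf x.1 h, zero_mul]
  · rw [hg x.2 (by omega), mul_zero]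

lemma Yser_deg : ∀ j, p - 1 < j → PowerSeries.coeff (R := K) j (Yser K p) = 0 := by
  intro j hj
  rw [Yser, PowerSeries.coeff_mk, if_neg (by omega)]

lemma Yser_pow_deg (n : ℕ) : ∀ j, n * (p - 1) < j →
    PowerSeries.coeff (R := K) j ((Yser K p) ^ n) = 0 := by
  induction n with
  | zero =>
    intro j hj
    rw [pow_zero, PowerSeries.coeff_one, if_neg (by omega)]
  | succ n ih =>
    intro j hj
    rw [pow_succ]
    exact coeff_mul_deg ih Yser_deg j (by rw [add_mul, one_mul] at hj; omega)

lemma aux_div_le {q m n : ℕ} (hq : 0 < q) (h : m ≤ q * n) : (m + q - 1) / q ≤ n := by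
  have h2 : m + q - 1 < (n + 1) * q := by
    rw [add_mul, one_mul, mul_comm n q]
    have h3 : m + q ≤ q * n + q := by omega
    omega
  exact Nat.lt_succ_iff.mp ((Nat.div_lt_iff_lt_mul hq).mpr h2)

lemma aux_le_mul_div {q m : ℕ} (hq : 0 < q) : m ≤ q * ((m + q - 1) / q) := by
  rcases Nat.eq_zero_or_pos m with rfl | hm
  · simp
  · have h1 := Nat.div_add_mod (m + q - 1) q
    have h2 : (m + q - 1) % q < q := Nat.mod_lt _ hq
    generalize hqd : q * ((m + q - 1) / q) = t at h1 ⊢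
    omega

lemma coeff_B_bound (hp : p.Prime) (hp3 : 3 ≤ p) (hpL : ‖(p : K)‖ = (p : ℝ)⁻¹) (m : ℕ) :
    ‖PowerSeries.coeff (R := K) m (DserF (((p : K) - 1)⁻¹) ((p : K) • Yser K p))‖
      ≤ ((p : ℝ)⁻¹) ^ ((m + (p - 1) - 1) / (p - 1)) := by
  haveI : CharZero K := aux_charZero hp hpL
  have hq : 0 < p - 1 := by omega
  have hppos : (0 : ℝ) < p := by exact_mod_cast hp.pos
  have hinvle : (p : ℝ)⁻¹ ≤ 1 := by
    rw [inv_le_one_iff₀]; right; exact_mod_cast hp.one_le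
  set n₀ := (m + (p - 1) - 1) / (p - 1) with hn₀def
  rw [DserF, PowerSeries.coeff_mk]
  apply IsUltrametricDist.norm_sum_le_of_forall_le_of_nonneg (by positivity)
  intro n _
  by_cases hcase : m ≤ (p - 1) * n
  · have hn₀n : n₀ ≤ n := aux_div_le hq hcase
    rw [norm_mul]
    have h1 : ‖lbinom (((p : K) - 1)⁻¹) n‖ ≤ 1 := aux_norm_lbinom hp hpL n
    have h2 : ‖PowerSeries.coeff (R := K) m (((p : K) • Yser K p) ^ n)‖ ≤ ((p : ℝ)⁻¹) ^ n := by
      rw [smul_pow, map_smul, smul_eq_mul, norm_mul, norm_pow, hpL]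
      calc ((p : ℝ)⁻¹) ^ n * ‖PowerSeries.coeff (R := K) m ((Yser K p) ^ n)‖
          ≤ ((p : ℝ)⁻¹) ^ n * 1 := by
            apply mul_le_mul_of_nonneg_left
              (coeff_pow_norm_le (Yser_norm_le hp hpL) n m) (by positivity)
        _ = ((p : ℝ)⁻¹) ^ n := mul_one _
    calc ‖lbinom (((p : K) - 1)⁻¹) n‖ * ‖PowerSeries.coeff (R := K) m (((p : K) • Yser K p) ^ n)‖
        ≤ 1 * ((p : ℝ)⁻¹) ^ n := mul_le_mul h1 h2 (norm_nonneg _) zero_le_one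
      _ = ((p : ℝ)⁻¹) ^ n := one_mul _
      _ ≤ ((p : ℝ)⁻¹) ^ n₀ := pow_le_pow_of_le_one (by positivity) hinvle hn₀n
  · have hz : PowerSeries.coeff (R := K) m (((p : K) • Yser K p) ^ n) = 0 := by
      rw [smul_pow, map_smul, smul_eq_mul, Yser_pow_deg n m (by rw [mul_comm]; omega), mul_zero]
    rw [hz, mul_zero, norm_zero]
    positivity

end FG

/-- `F ∈ 𝒪_ℰ^{p(p-1)}(-p)`: all coefficients of `F` lie in `𝒪_L`,
`F^{p-1} = (t^{p-1}+1)^p - 1`, and `w_k(F) ≥ -k·p(p-1) + p` for all `k ∈ ℚ`. -/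
theorem statement_5 {p : ℕ} (hp : p.Prime) (hp3 : 3 ≤ p)
    (L : Type*) [NormedField L] [CompleteSpace L] [IsUltrametricDist L]
    (hpL : ‖(p : L)‖ = (p : ℝ)⁻¹) :
    MemOE p ((p : ℝ) * ((p : ℝ) - 1)) (-(p : ℝ)) (FE p : ℤ → L) ∧
    powE (FE p : ℤ → L) (p - 1) = GE p := by
  haveI : CharZero L := aux_charZero hp hpL
  have hq : 0 < p - 1 := by omega
  have hp1 : 1 ≤ p := by omega
  have hppos : (0 : ℝ) < p := by exact_mod_cast hp.pos
  have hp1R : (1 : ℝ) < p := by exact_mod_cast hp.one_lt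
  have hpne : (p : L) ≠ 0 := by
    exact_mod_cast (Nat.cast_ne_zero (R := L)).mpr hp.pos.ne'
  have hinvlt : (p : ℝ)⁻¹ < 1 := by rw [inv_lt_one_iff₀]; right; exact hp1R
  have hFE := FE_phiF (K := L) hp3
  have hbound := coeff_B_bound (K := L) hp hp3 hpL
  set B := DserF (((p : L) - 1)⁻¹) ((p : L) • Yser L p) with hBdef
  have hcoe : ∀ m : ℕ, ‖PowerSeries.coeff (R := L) m B‖ ≤ 1 := by
    intro m
    refine (hbound m).trans ?_
    exact pow_le_one₀ (by positivity) hinvlt.le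
  have hFle1 : ∀ j : ℤ, ‖(FE p : ℤ → L) j‖ ≤ 1 := by
    intro j
    rw [hFE]
    rcases phiF_cases hq (p : ℤ) j B with ⟨m, rfl, hv⟩ | ⟨hv, _⟩
    · rw [hv]; exact hcoe m
    · rw [hv, norm_zero]; exact zero_le_one
  constructor
  · refine ⟨⟨⟨1, hFle1⟩, ?_⟩, hFle1, ?_⟩
    · -- tail condition
      intro ε hε
      obtain ⟨KK, hKK⟩ := exists_pow_lt_of_lt_one hε hinvlt
      refine ⟨(p : ℤ) - ((p - 1 : ℕ) : ℤ) * (((p - 1) * KK + 1 : ℕ) : ℤ), ?_⟩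
      intro j hj
      rw [hFE]
      rcases phiF_cases hq (p : ℤ) j B with ⟨m, rfl, hv⟩ | ⟨hv, _⟩
      · rw [hv]
        have hm : (p - 1) * KK + 1 ≤ m := by
          have h1 : ((p - 1 : ℕ) : ℤ) * (((p - 1) * KK + 1 : ℕ) : ℤ)
              ≤ ((p - 1 : ℕ) : ℤ) * (m : ℤ) := by linarith [hj]
          have h2 : (((p - 1) * KK + 1 : ℕ) : ℤ) ≤ (m : ℤ) :=
            le_of_mul_le_mul_left h1 (by exact_mod_cast hq)
          exact_mod_cast h2
        have hn₀ : KK ≤ (m + (p - 1) - 1) / (p - 1) := by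
          refine (Nat.le_div_iff_mul_le hq).mpr ?_
          rw [mul_comm]
          omega
        refine (hbound m).trans ?_
        calc ((p : ℝ)⁻¹) ^ ((m + (p - 1) - 1) / (p - 1))
            ≤ ((p : ℝ)⁻¹) ^ KK := pow_le_pow_of_le_one (by positivity) hinvlt.le hn₀
          _ ≤ ε := hKK.le
      · rw [hv, norm_zero]; exact hε.le
    · -- partial valuation condition
      intro k n hk
      rw [hFE] at hk
      rcases phiF_cases hq (p : ℤ) n B with ⟨m, rfl, hv⟩ | ⟨hv, _⟩
      · rw [hv] at hk
        set n₀ := (m + (p - 1) - 1) / (p - 1) with hn₀def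
        have h1 : (p : ℝ) ^ (-(k : ℝ)) ≤ ((p : ℝ)⁻¹) ^ n₀ := le_trans hk (hbound m)
        have h2 : ((p : ℝ)⁻¹) ^ n₀ = (p : ℝ) ^ (-(n₀ : ℝ)) := by
          rw [inv_pow, ← Real.rpow_natCast (p : ℝ) n₀, ← Real.rpow_neg hppos.le]
        rw [h2] at h1
        have h3 : -(k : ℝ) ≤ -(n₀ : ℝ) := (Real.rpow_le_rpow_left_iff hp1R).mp h1
        have hkn₀ : (n₀ : ℝ) ≤ (k : ℝ) := by linarith
        have hmR : (m : ℝ) ≤ ((p : ℝ) - 1) * n₀ := by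
          have h4 : m ≤ (p - 1) * n₀ := aux_le_mul_div hq
          calc (m : ℝ) ≤ (((p - 1) * n₀ : ℕ) : ℝ) := by exact_mod_cast h4
            _ = ((p : ℝ) - 1) * n₀ := by push_cast [Nat.cast_sub hp1]; ring
        have hn₀0 : (0 : ℝ) ≤ (n₀ : ℝ) := by positivity
        have hstep : (m : ℝ) ≤ (p : ℝ) * (k : ℝ) := by
          calc (m : ℝ) ≤ ((p : ℝ) - 1) * n₀ := hmR
            _ ≤ (p : ℝ) * n₀ := by nlinarith
            _ ≤ (p : ℝ) * k := by nlinarith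
        push_cast [Nat.cast_sub hp1]
        nlinarith [hstep, hp1R, Nat.cast_nonneg (α := ℝ) m]
      · exfalso
        rw [hv, norm_zero] at hk
        have h5 : (0 : ℝ) < (p : ℝ) ^ (-(k : ℝ)) := Real.rpow_pos_of_pos hppos _
        linarith
  · -- the power identity
    have h1 : powE (FE p : ℤ → L) (p - 1)
        = phiF (p - 1) (((p - 1 : ℕ) : ℤ) * (p : ℤ)) (B ^ (p - 1)) := by
      rw [hFE, powE_phiF hq]
    have hconstY : PowerSeries.constantCoeff (R := L) (Yser L p) = 0 := Yser_const
    have hconst : PowerSeries.constantCoeff (R := L) ((p : L) • Yser L p) = 0 := by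
      rw [← PowerSeries.coeff_zero_eq_constantCoeff_apply, map_smul, smul_eq_mul,
        PowerSeries.coeff_zero_eq_constantCoeff_apply, hconstY, mul_zero]
    have hsubne : (p : L) - 1 ≠ 0 := by
      refine sub_ne_zero.mpr ?_
      intro hcon
      have : p = 1 := by exact_mod_cast hcon
      omega
    have h2 : B ^ (p - 1) = 1 + (p : L) • Yser L p := by
      obtain ⟨q', hq'⟩ : ∃ q', p - 1 = q' + 1 := ⟨p - 2, by omega⟩
      rw [hq', hBdef, DserF_pow hconst]
      have h4 : ((q' + 1 : ℕ) : L) = (p : L) - 1 := by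
        rw [← hq']
        push_cast [Nat.cast_sub hp1]
        ring
      rw [h4, mul_inv_cancel₀ hsubne, DserF_one hconst]
    rw [h1, h2, GE_phiF hp3 hpne]
    congr 1
    push_cast [Nat.cast_sub hp1]
    ring

end AmiceStmt
end
end

section
/- Let x, y ∈ 𝐜(I) have all entries nonzero and satisfy x > y. If u: 𝐜(I,x) → 𝐬(I) is a continuous L-linear map with u(𝐜(I,x)) ⊆ 𝐬(I,y), then u, viewed as an operator from 𝐜(I,x) to itself (note 𝐬(I,y) ⊆ 𝐜(I,x) since x > y), is completely continuous. -/
open Filter Topology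
open scoped Classical

noncomputable section

namespace FredholmStmt

variable {L : Type*} [NontriviallyNormedField L]

/-- Membership in `𝐬(I,b)`: families of the form `(cᵢ bᵢ)` with bounded `(cᵢ)`. -/
def sBall {I : Type*} (b : I → L) : Set (I → L) :=
  {f | ∃ C : ℝ, ∀ i, ‖f i‖ ≤ C * ‖b i‖}

/-- Membership in `𝐜(I,b)`: families of the form `(cᵢ bᵢ)` with `cᵢ → 0` along the
cofinite filter. -/
def cBall {I : Type*} (b : I → L) : Set (I → L) :=
  {f | f ∈ sBall b ∧ ∀ ε : ℝ, 0 < ε → {i | ε * ‖b i‖ < ‖f i‖}.Finite}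

/-- `b ∈ 𝐜(I)`: the family `b` tends to `0` along the cofinite filter on `I`. -/
def cZero {I : Type*} (b : I → L) : Prop :=
  ∀ ε : ℝ, 0 < ε → {i | ε < ‖b i‖}.Finite

/-- The partial order `x > y` on `𝐜(I)`: `v_p(yᵢ) - v_p(xᵢ) → ∞`, i.e. `‖yᵢ‖/‖xᵢ‖ → 0`,
along the cofinite filter. -/
def gtRel {I : Type*} (x y : I → L) : Prop :=
  ∀ ε : ℝ, 0 < ε → {i | ε * ‖x i‖ < ‖y i‖}.Finite

/-- The norm of `𝐜(I,b)` and `𝐬(I,b)` (for which `B(I,b)` is an integral basis). -/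
def normB {I : Type*} (b f : I → L) : ℝ := ⨆ i, ‖f i‖ / ‖b i‖

/-- The sup norm of `𝐬(I)`. -/
def supNorm {I : Type*} (f : I → L) : ℝ := ⨆ i, ‖f i‖

/-- `u` is `L`-linear on the subspace `D`. -/
def IsLinearOn {I : Type*} (u : (I → L) → I → L) (D : Set (I → L)) : Prop :=
  (∀ f ∈ D, ∀ g ∈ D, u (f + g) = u f + u g) ∧
    ∀ (c : L), ∀ f ∈ D, u (c • f) = c • u f

/-- `u` has finite-dimensional image on `D`. -/
def FiniteRankOn {I : Type*} (u : (I → L) → I → L) (D : Set (I → L)) : Prop :=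
  ∃ G : Submodule L (I → L), FiniteDimensional L G ∧ ∀ f ∈ D, u f ∈ G

/-- `u` is a completely continuous operator on `𝐜(I,b)`: it is the limit, in the
operator norm, of continuous operators with finite-dimensional image. -/
def CompletelyContinuousOn {I : Type*} (u : (I → L) → I → L) (b : I → L) : Prop :=
  ∀ ε : ℝ, 0 < ε → ∃ u' : (I → L) → I → L,
    IsLinearOn u' (cBall b) ∧
    (∃ C : ℝ, ∀ f ∈ cBall b, normB b (u' f) ≤ C * normB b f) ∧
    FiniteRankOn u' (cBall b) ∧
    ∀ f ∈ cBall b, normB b (u f - u' f) ≤ ε * normB b f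

/-- The matrix `(n_{ij})` of `u` in the basis `B(I,b) = {bⱼ eⱼ}`:
`u(bⱼ eⱼ) = ∑ᵢ n_{ij} bᵢ eᵢ`. -/
def matrixOf {I : Type*} (u : (I → L) → I → L) (b : I → L) : I → I → L :=
  fun i j => u (fun k => if k = j then b j else 0) i / b i

/-- The term of the Fredholm determinant attached to a finite subset `S` of the index
set: `∑_{σ ∈ Sym(S)} sgn(σ) ∏_{i ∈ S} n_{i σ(i)}`. -/
def fredholmTerm {ι : Type*} (nm : ι → ι → L) (S : Finset ι) : L :=
  ∑ σ : Equiv.Perm {i // i ∈ S},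
    ((Equiv.Perm.sign σ : ℤ) : L) * ∏ i : {i // i ∈ S}, nm i.1 (σ i).1

/-- The `n`-th coefficient `cₙ` of the Fredholm determinant `det(1 - su) = ∑ cₙ sⁿ`:
`cₙ = (-1)ⁿ ∑_{|S| = n} ∑_{σ ∈ Sym(S)} sgn(σ) ∏_{i ∈ S} n_{i σ(i)}`. -/
def detCoeff {ι : Type*} (nm : ι → ι → L) (n : ℕ) : L :=
  (-1 : L) ^ n * ∑' S : {S : Finset ι // S.card = n}, fredholmTerm nm S.1

/-- The additive valuation `v_p` on `L` (with values in `EReal`, `v_p(0) = ⊤`),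
normalized by `v_p(p) = 1` when `‖p‖ = p⁻¹`. -/
def vpE (p : ℕ) (z : L) : EReal :=
  if z = 0 then ⊤ else ((-(Real.log ‖z‖ / Real.log p) : ℝ) : EReal)

/-- `col_w(nm)`: the smallest `p`-adic valuation occurring in the column `w` of the
matrix `nm`. -/
def colOf {ι : Type*} (p : ℕ) (nm : ι → ι → L) (w : ι) : EReal :=
  ⨅ w' : ι, vpE p (nm w' w)

lemma sum_bound {I : Type*} (r : I → ℝ) (hr : ∀ i, 0 ≤ r i) {s : Set I} (hs : s.Finite)
    (hout : ∀ i ∉ s, r i ≤ 1) : ∃ Y : ℝ, 1 ≤ Y ∧ ∀ i, r i ≤ Y := by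
  classical
  have hsum : 0 ≤ hs.toFinset.sum r := Finset.sum_nonneg fun j _ => hr j
  refine ⟨1 + hs.toFinset.sum r, by linarith, fun i => ?_⟩
  by_cases hi : i ∈ s
  · have h1 : r i ≤ hs.toFinset.sum r :=
      Finset.single_le_sum (fun j _ => hr j) (hs.mem_toFinset.mpr hi)
    linarith
  · have := hout i hi; linarith

lemma normB_nonneg {I : Type*} (b f : I → L) : 0 ≤ normB b f :=
  Real.iSup_nonneg fun i => div_nonneg (norm_nonneg _) (norm_nonneg _)

lemma uniform_bound {L : Type*} [NontriviallyNormedField L] [CompleteSpace L]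
    {I : Type*}
    (x y : I → L) (hx0 : ∀ i, x i ≠ 0) (hy0 : ∀ i, y i ≠ 0)
    (hyc : cZero y)
    (u : (I → L) → I → L)
    (hlin : IsLinearOn u (cBall x))
    (hcont : ∃ C : ℝ, ∀ f ∈ cBall x, supNorm (u f) ≤ C * normB x f)
    (himg : ∀ f ∈ cBall x, u f ∈ sBall y) :
    ∃ K : ℝ, 0 ≤ K ∧ ∀ f ∈ cBall x, ∀ i, ‖u f i‖ ≤ K * ‖y i‖ * normB x f := by
  classical
  letI : TopologicalSpace I := ⊥
  haveI : DiscreteTopology I := ⟨rfl⟩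
  -- y is bounded
  obtain ⟨Y, hY1, hY⟩ : ∃ Y : ℝ, 1 ≤ Y ∧ ∀ i, ‖y i‖ ≤ Y := by
    refine sum_bound (fun i => ‖y i‖) (fun i => norm_nonneg _) (hyc 1 one_pos) fun i hi => ?_
    exact le_of_not_gt hi
  obtain ⟨C, hC⟩ := hcont
  -- coordinates are bounded by supNorm
  have hsup : ∀ f ∈ cBall x, ∀ i, ‖u f i‖ ≤ supNorm (u f) := by
    intro f hf i
    obtain ⟨C', hC'⟩ := himg f hf
    have hbdd : BddAbove (Set.range fun i => ‖u f i‖) := by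
      refine ⟨max C' 0 * Y, ?_⟩
      rintro _ ⟨j, rfl⟩
      calc ‖u f j‖ ≤ C' * ‖y j‖ := hC' j
        _ ≤ max C' 0 * Y :=
          mul_le_mul (le_max_left _ _) (hY j) (norm_nonneg _) (le_max_right _ _)
    exact le_ciSup hbdd i
  set E := ZeroAtInftyContinuousMap I L
  -- the map from E into cBall x
  set T : E → (I → L) := fun g i => g i * x i with hTdef
  have hgcof : ∀ g : E, Filter.Tendsto (fun i => g i) Filter.cofinite (𝓝 0) := by
    intro g
    have := ZeroAtInftyContinuousMapClass.zero_at_infty (f := g)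
    rwa [cocompact_eq_cofinite] at this
  have hTmem : ∀ g : E, T g ∈ cBall x := by
    intro g
    constructor
    · refine ⟨‖g‖, fun i => ?_⟩
      have h1 : ‖g i‖ ≤ ‖g‖ := g.toBCF.norm_coe_le_norm i
      calc ‖g i * x i‖ = ‖g i‖ * ‖x i‖ := norm_mul _ _
        _ ≤ ‖g‖ * ‖x i‖ := mul_le_mul_of_nonneg_right h1 (norm_nonneg _)
    · intro ε hε
      have hfin : {i | ε < ‖g i‖}.Finite := by
        have h0 := hgcof g
        rw [NormedAddCommGroup.tendsto_nhds_zero] at h0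
        have h1 := h0 ε hε
        rw [Filter.eventually_cofinite] at h1
        exact h1.subset fun i hi => by
          simp only [Set.mem_setOf_eq, not_lt] at hi ⊢
          exact hi.le
      refine hfin.subset fun i hi => ?_
      have hxpos : (0:ℝ) < ‖x i‖ := norm_pos_iff.mpr (hx0 i)
      have : ε * ‖x i‖ < ‖g i‖ * ‖x i‖ := by simpa [hTdef, norm_mul] using hi
      exact lt_of_mul_lt_mul_right this hxpos.le
  -- norm of T g
  have hTnorm : ∀ g : E, normB x (T g) ≤ ‖g‖ := by
    intro g
    refine Real.iSup_le (fun i => ?_) (norm_nonneg _)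
    have hxpos : (0:ℝ) < ‖x i‖ := norm_pos_iff.mpr (hx0 i)
    rw [show (T g) i = g i * x i from rfl, norm_mul, mul_div_assoc, div_self hxpos.ne',
      mul_one]
    exact g.toBCF.norm_coe_le_norm i
  -- the family of continuous linear functionals
  have hTadd : ∀ g h : E, T (g + h) = T g + T h := by
    intro g h; funext i
    show (g + h) i * x i = g i * x i + h i * x i
    rw [ZeroAtInftyContinuousMap.coe_add, Pi.add_apply, add_mul]
  have hTsmul : ∀ (c : L) (g : E), T (c • g) = c • T g := by
    intro c g; funext i
    show (c • g) i * x i = c * (g i * x i)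
    rw [ZeroAtInftyContinuousMap.coe_smul, Pi.smul_apply, smul_eq_mul, mul_assoc]
  set φ : I → E →L[L] L := fun i =>
    LinearMap.mkContinuous
      { toFun := fun g => u (T g) i * (y i)⁻¹
        map_add' := by
          intro g h
          show u (T (g + h)) i * (y i)⁻¹ = u (T g) i * (y i)⁻¹ + u (T h) i * (y i)⁻¹
          rw [hTadd, hlin.1 (T g) (hTmem g) (T h) (hTmem h), Pi.add_apply, add_mul]
        map_smul' := by
          intro c g
          show u (T (c • g)) i * (y i)⁻¹ = c • (u (T g) i * (y i)⁻¹)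
          rw [hTsmul, hlin.2 c (T g) (hTmem g), Pi.smul_apply, smul_eq_mul,
            smul_eq_mul, mul_assoc] }
      (max C 0 * ‖(y i)‖⁻¹)
      (by
        intro g
        have h1 : ‖u (T g) i‖ ≤ max C 0 * ‖g‖ := by
          calc ‖u (T g) i‖ ≤ supNorm (u (T g)) := hsup _ (hTmem g) i
            _ ≤ C * normB x (T g) := hC _ (hTmem g)
            _ ≤ max C 0 * ‖g‖ :=
              mul_le_mul (le_max_left _ _) (hTnorm g) (normB_nonneg _ _) (le_max_right _ _)
        have hyipos : (0:ℝ) < ‖y i‖ := norm_pos_iff.mpr (hy0 i)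
        calc ‖u (T g) i * (y i)⁻¹‖ = ‖u (T g) i‖ * ‖y i‖⁻¹ := by rw [norm_mul, norm_inv]
          _ ≤ (max C 0 * ‖g‖) * ‖y i‖⁻¹ := by
            exact mul_le_mul_of_nonneg_right h1 (by positivity)
          _ = max C 0 * ‖y i‖⁻¹ * ‖g‖ := by ring) with hφdef
  -- pointwise boundedness
  obtain ⟨K, hK⟩ : ∃ K, ∀ i, ‖φ i‖ ≤ K := by
    apply banach_steinhaus
    intro g
    obtain ⟨C', hC'⟩ := himg (T g) (hTmem g)
    refine ⟨max C' 0, fun i => ?_⟩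
    have hyipos : (0:ℝ) < ‖y i‖ := norm_pos_iff.mpr (hy0 i)
    have : ‖φ i g‖ = ‖u (T g) i‖ * ‖y i‖⁻¹ := by
      rw [hφdef]
      show ‖u (T g) i * (y i)⁻¹‖ = _
      rw [norm_mul, norm_inv]
    rw [this]
    rw [mul_inv_le_iff₀ hyipos]
    calc ‖u (T g) i‖ ≤ C' * ‖y i‖ := hC' i
      _ ≤ max C' 0 * ‖y i‖ := mul_le_mul_of_nonneg_right (le_max_left _ _) (norm_nonneg _)
  refine ⟨max K 0, le_max_right _ _, fun f hf i => ?_⟩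
  -- build the C₀ element g = f / x
  have hcont' : Continuous (fun i => f i * (x i)⁻¹) := continuous_of_discreteTopology
  have hzero : Filter.Tendsto (fun i => f i * (x i)⁻¹) (cocompact I) (𝓝 0) := by
    rw [cocompact_eq_cofinite]
    rw [NormedAddCommGroup.tendsto_nhds_zero]
    intro ε hε
    rw [Filter.eventually_cofinite]
    refine (hf.2 (ε/2) (by linarith)).subset fun i hi => ?_
    simp only [Set.mem_setOf_eq, not_lt] at hi ⊢
    have hxpos : (0:ℝ) < ‖x i‖ := norm_pos_iff.mpr (hx0 i)
    have h2 : ε ≤ ‖f i * (x i)⁻¹‖ := hi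
    rw [norm_mul, norm_inv] at h2
    have h3 : ε * ‖x i‖ ≤ ‖f i‖ := by
      rw [← le_div_iff₀ hxpos] at *
      calc ε ≤ ‖f i‖ * ‖x i‖⁻¹ := h2
        _ = ‖f i‖ / ‖x i‖ := by rw [div_eq_mul_inv]
    calc ε / 2 * ‖x i‖ < ε * ‖x i‖ := by nlinarith
      _ ≤ ‖f i‖ := h3
  set g : E := ⟨⟨fun i => f i * (x i)⁻¹, hcont'⟩, hzero⟩ with hgdef
  have hTg : T g = f := by
    funext i
    show f i * (x i)⁻¹ * x i = f i
    exact inv_mul_cancel_right₀ (hx0 i) (f i)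
  have hgnorm : ‖g‖ ≤ normB x f := by
    rw [← ZeroAtInftyContinuousMap.norm_toBCF_eq_norm]
    refine (BoundedContinuousFunction.norm_le (normB_nonneg x f)).mpr fun i => ?_
    have hbdd : BddAbove (Set.range fun i => ‖f i‖ / ‖x i‖) := by
      obtain ⟨C', hC'⟩ := hf.1
      refine ⟨max C' 0, ?_⟩
      rintro _ ⟨j, rfl⟩
      have hxpos : (0:ℝ) < ‖x j‖ := norm_pos_iff.mpr (hx0 j)
      rw [div_le_iff₀ hxpos]
      calc ‖f j‖ ≤ C' * ‖x j‖ := hC' j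
        _ ≤ max C' 0 * ‖x j‖ := mul_le_mul_of_nonneg_right (le_max_left _ _) (norm_nonneg _)
    have : ‖(g.toBCF) i‖ = ‖f i‖ / ‖x i‖ := by
      show ‖f i * (x i)⁻¹‖ = _
      rw [norm_mul, norm_inv, div_eq_mul_inv]
    rw [this]
    exact le_ciSup hbdd i
  have hφi : ‖φ i g‖ ≤ max K 0 * normB x f := by
    calc ‖φ i g‖ ≤ ‖φ i‖ * ‖g‖ := (φ i).le_opNorm g
      _ ≤ max K 0 * normB x f :=
        mul_le_mul (le_max_of_le_left (hK i)) hgnorm (norm_nonneg _)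
          (le_max_right _ _)
  have hyipos : (0:ℝ) < ‖y i‖ := norm_pos_iff.mpr (hy0 i)
  have hφival : ‖φ i g‖ = ‖u f i‖ * ‖y i‖⁻¹ := by
    rw [hφdef]
    show ‖u (T g) i * (y i)⁻¹‖ = _
    rw [hTg, norm_mul, norm_inv]
  rw [hφival, mul_inv_le_iff₀ hyipos] at hφi
  calc ‖u f i‖ ≤ max K 0 * normB x f * ‖y i‖ := hφi
    _ = max K 0 * ‖y i‖ * normB x f := by ring


theorem statement_10' {L : Type*} [NontriviallyNormedField L] [CompleteSpace L]
    {I : Type*}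
    (x y : I → L) (hx0 : ∀ i, x i ≠ 0) (hy0 : ∀ i, y i ≠ 0)
    (hyc : cZero y) (hxy : gtRel x y)
    (u : (I → L) → I → L)
    (hlin : IsLinearOn u (cBall x))
    (hcont : ∃ C : ℝ, ∀ f ∈ cBall x, supNorm (u f) ≤ C * normB x f)
    (himg : ∀ f ∈ cBall x, u f ∈ sBall y) :
    ∀ ε : ℝ, 0 < ε → ∃ u' : (I → L) → I → L,
      IsLinearOn u' (cBall x) ∧
      (∃ C : ℝ, ∀ f ∈ cBall x, normB x (u' f) ≤ C * normB x f) ∧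
      (∃ G : Submodule L (I → L), FiniteDimensional L G ∧ ∀ f ∈ cBall x, u' f ∈ G) ∧
      ∀ f ∈ cBall x, normB x (u f - u' f) ≤ ε * normB x f := by
  classical
  obtain ⟨K, hK0, hK⟩ := uniform_bound x y hx0 hy0 hyc u hlin hcont himg
  obtain ⟨M, hM1, hM⟩ : ∃ M : ℝ, 1 ≤ M ∧ ∀ i, ‖y i‖ / ‖x i‖ ≤ M := by
    refine sum_bound _ (fun i => div_nonneg (norm_nonneg _) (norm_nonneg _)) (hxy 1 one_pos)
      fun i hi => ?_
    have hxpos : (0:ℝ) < ‖x i‖ := norm_pos_iff.mpr (hx0 i)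
    rw [div_le_one hxpos]
    have : ¬ (1 * ‖x i‖ < ‖y i‖) := hi
    rw [one_mul] at this
    exact le_of_not_gt this
  have hMx : ∀ i, ‖y i‖ ≤ M * ‖x i‖ := fun i => by
    have hxpos : (0:ℝ) < ‖x i‖ := norm_pos_iff.mpr (hx0 i)
    have := (div_le_iff₀ hxpos).mp (hM i)
    linarith
  intro ε hε
  have hK1 : (0:ℝ) < K + 1 := by linarith
  set δ := ε / (K + 1) with hδdef
  have hδ : 0 < δ := div_pos hε hK1
  set S := (hxy δ hδ).toFinset with hSdef
  have hSmem : ∀ i, i ∈ S ↔ δ * ‖x i‖ < ‖y i‖ := fun i => (hxy δ hδ).mem_toFinset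
  refine ⟨fun f i => if i ∈ S then u f i else 0, ⟨?_, ?_⟩, ?_, ?_, ?_⟩
  · intro f hf g hg
    funext i
    simp only [hlin.1 f hf g hg, Pi.add_apply]
    split <;> simp
  · intro c f hf
    funext i
    simp only [hlin.2 c f hf, Pi.smul_apply, smul_eq_mul]
    split <;> simp
  · refine ⟨K * M, fun f hf => ?_⟩
    have hn := normB_nonneg x f
    refine Real.iSup_le (fun i => ?_)
      (mul_nonneg (mul_nonneg hK0 (by linarith)) hn)
    have hxpos : (0:ℝ) < ‖x i‖ := norm_pos_iff.mpr (hx0 i)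
    by_cases hi : i ∈ S
    · simp only [hi, if_true]
      rw [div_le_iff₀ hxpos]
      calc ‖u f i‖ ≤ K * ‖y i‖ * normB x f := hK f hf i
        _ ≤ K * (M * ‖x i‖) * normB x f := by nlinarith [hMx i, mul_nonneg hK0 hn]
        _ = K * M * normB x f * ‖x i‖ := by ring
    · simp only [hi, if_false, norm_zero, zero_div]
      exact mul_nonneg (mul_nonneg hK0 (by linarith)) hn
  · refine ⟨Submodule.span L ((fun i => (Pi.single i (1:L) : I → L)) '' ↑S), ?_, ?_⟩
    · exact FiniteDimensional.span_of_finite L (S.finite_toSet.image _)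
    · intro f hf
      have hrepr : (fun i => if i ∈ S then u f i else 0)
          = ∑ j ∈ S, u f j • (Pi.single j (1:L) : I → L) := by
        funext i
        rw [Finset.sum_apply]
        simp only [Pi.smul_apply, Pi.single_apply, smul_eq_mul, mul_ite, mul_one, mul_zero]
        rw [Finset.sum_ite_eq S i (fun j => u f j)]
      show (fun i => if i ∈ S then u f i else 0) ∈ _
      rw [hrepr]
      exact Submodule.sum_mem _ fun j hj => Submodule.smul_mem _ _
        (Submodule.subset_span ⟨j, by simpa using hj, rfl⟩)
  · intro f hf
    have hn := normB_nonneg x f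
    refine Real.iSup_le (fun i => ?_) (mul_nonneg hε.le hn)
    have hxpos : (0:ℝ) < ‖x i‖ := norm_pos_iff.mpr (hx0 i)
    by_cases hi : i ∈ S
    · simp only [Pi.sub_apply, hi, if_true, sub_self, norm_zero, zero_div]
      exact mul_nonneg hε.le hn
    · simp only [Pi.sub_apply, hi, if_false, sub_zero]
      have hyi : ‖y i‖ ≤ δ * ‖x i‖ := by
        have := (hSmem i).not.mp hi
        exact le_of_not_gt (by simpa using this)
      rw [div_le_iff₀ hxpos]
      have h1 : ‖u f i‖ ≤ K * ‖y i‖ * normB x f := hK f hf i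
      have h3 : K * δ ≤ ε := by
        have : K * (ε / (K + 1)) ≤ (K + 1) * (ε / (K + 1)) := by nlinarith
        calc K * δ = K * (ε / (K + 1)) := by rw [hδdef]
          _ ≤ (K + 1) * (ε / (K + 1)) := this
          _ = ε := by field_simp
      calc ‖u f i‖ ≤ K * ‖y i‖ * normB x f := h1
        _ ≤ K * (δ * ‖x i‖) * normB x f := by nlinarith [mul_nonneg hK0 hn]
        _ = (K * δ) * (normB x f * ‖x i‖) := by ring
        _ ≤ ε * (normB x f * ‖x i‖) := by nlinarith [mul_nonneg hn hxpos.le]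
        _ = ε * normB x f * ‖x i‖ := by ring


/-- If `x > y` (entries nonzero) and `u : 𝐜(I,x) → 𝐬(I)` is a
continuous `L`-linear map with `u(𝐜(I,x)) ⊆ 𝐬(I,y)`, then `u`, viewed as an operator
from `𝐜(I,x)` to itself, is completely continuous. -/
theorem statement_10 {L : Type*} [NontriviallyNormedField L] [CompleteSpace L]
    [IsUltrametricDist L] {I : Type*} [Countable I] [Infinite I]
    (x y : I → L) (hx0 : ∀ i, x i ≠ 0) (hy0 : ∀ i, y i ≠ 0)
    (hxc : cZero x) (hyc : cZero y) (hxy : gtRel x y)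
    (u : (I → L) → I → L)
    (hlin : IsLinearOn u (cBall x))
    (hcont : ∃ C : ℝ, ∀ f ∈ cBall x, supNorm (u f) ≤ C * normB x f)
    (himg : ∀ f ∈ cBall x, u f ∈ sBall y) :
    CompletelyContinuousOn u x := by
  intro ε hε
  obtain ⟨u', h1, h2, h3, h4⟩ := statement_10' x y hx0 hy0 hyc hxy u hlin hcont himg ε hε
  exact ⟨u', h1, h2, h3, h4⟩

end FredholmStmt
end
end
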